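/- arXiv:1710.08872 — 12 statements merged into one kernel-verified Lean document; each statement's English description precedes it below -/
import Mathlib

section
/- Let q be a prime power with q > 2 and let n ≥ 1. Then every matrix in Mat_n(F_q) can be written as a sum of two invertible matrices. -/
theorem stmt_4 (F : Type) [Field F] [Fintype F] (hq : 2 < Fintype.card F)
    (n : ℕ) (hn : 1 ≤ n) (M : Matrix (Fin n) (Fin n) F) :
    ∃ A B : Matrix (Fin n) (Fin n) F, A.det ≠ 0 ∧ B.det ≠ 0 ∧ M = A + B := by
  classical
  have h : ∀ i : Fin n, ∃ x : F, x ≠ 0 ∧ x ≠ M i i := by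
    intro i
    have hc : (({0, M i i} : Finset F)ᶜ).Nonempty := by
      rw [← Finset.card_pos, Finset.card_compl]
      have : ({0, M i i} : Finset F).card ≤ 2 := Finset.card_insert_le _ _ |>.trans (by simp)
      omega
    obtain ⟨x, hx⟩ := hc
    simp only [Finset.mem_compl, Finset.mem_insert, Finset.mem_singleton, not_or] at hx
    exact ⟨x, hx.1, hx.2⟩
  choose a ha0 haM using h
  set A : Matrix (Fin n) (Fin n) F :=
    Matrix.of fun i j => if i < j then 0 else if i = j then a i else M i j with hA
  refine ⟨A, M - A, ?_, ?_, by abel⟩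
  · have ht : A.BlockTriangular OrderDual.toDual := by
      intro i j hij
      simp only [hA, Matrix.of_apply, OrderDual.toDual_lt_toDual] at hij ⊢
      rw [if_pos hij]
    rw [Matrix.det_of_lowerTriangular A ht]
    refine Finset.prod_ne_zero_iff.mpr fun i _ => ?_
    simp [hA, ha0 i]
  · have ht : (M - A).BlockTriangular id := by
      intro i j hij
      simp only [id_eq] at hij
      simp [hA, Matrix.sub_apply, if_neg (not_lt.mpr hij.le), if_neg hij.ne']
    rw [Matrix.det_of_upperTriangular ht]
    refine Finset.prod_ne_zero_iff.mpr fun i _ => ?_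
    simp only [Matrix.sub_apply, hA, Matrix.of_apply, lt_irrefl, if_false, if_pos rfl]
    exact sub_ne_zero.mpr (Ne.symm (haM i))
end

section
/- Let n ≥ 2. Then every matrix in Mat_n(F_2) can be written as a sum of two invertible matrices. -/
open Matrix Finset
open Fin.CommRing

private lemma units_smul_zmod2 (u : ℤˣ) (x : ZMod 2) : u • x = x := by
  rcases Int.units_eq_one_or u with h | h <;> subst h
  · simp
  · simp [Units.smul_def, CharTwo.neg_eq]

private lemma fin_one_ne_zero (m : ℕ) : (1 : Fin (m + 2)) ≠ 0 := by
  intro h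
  have := congrArg Fin.val h
  simp [Fin.val_one] at this

private lemma perm_classify (m : ℕ) (σ : Equiv.Perm (Fin (m + 2)))
    (h : ∀ i, σ i = i ∨ σ i = i - 1) : σ = 1 ∨ σ = Equiv.subRight 1 := by
  by_cases hid : ∀ i, σ i = i
  · left; ext i; simp [hid i]
  · right
    push_neg at hid
    obtain ⟨i₀, hi₀⟩ := hid
    have hi₀' : σ i₀ = i₀ - 1 := (h i₀).resolve_left hi₀
    have one_ne : (1 : Fin (m + 2)) ≠ 0 := fin_one_ne_zero m
    have closure : ∀ i : Fin (m + 2), σ i = i - 1 → σ (i - 1) = i - 1 - 1 := by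
      intro i hi
      rcases h (i - 1) with h' | h'
      · exfalso
        have h2 : σ (i - 1) = σ i := by rw [h', hi]
        have h3 : i - 1 = i := σ.injective h2
        exact one_ne (sub_eq_self.mp h3)
      · exact h'
    have key : ∀ k : ℕ, σ (i₀ - (k : Fin (m + 2))) = i₀ - (k : Fin (m + 2)) - 1 := by
      intro k
      induction k with
      | zero => simpa using hi₀'
      | succ k ih =>
        have hstep := closure _ ih
        have hc : ((k + 1 : ℕ) : Fin (m + 2)) = (k : Fin (m + 2)) + 1 := by push_cast; ring
        rw [hc, sub_add_eq_sub_sub]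
        exact hstep
    ext j
    have hj : i₀ - (((i₀ - j : Fin (m + 2)).val : ℕ) : Fin (m + 2)) = j := by
      rw [Fin.cast_val_eq_self]; ring
    have hkey := key (i₀ - j).val
    rw [hj] at hkey
    rw [Equiv.subRight_apply]
    exact congrArg Fin.val hkey

private lemma circ_det (m : ℕ) (d : Fin (m + 2) → ZMod 2) :
    (Matrix.diagonal d + Matrix.of fun i j : Fin (m + 2) =>
      if j = i + 1 then (1 : ZMod 2) else 0).det = (∏ i, d i) + 1 := by
  set A : Matrix (Fin (m + 2)) (Fin (m + 2)) (ZMod 2) :=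
    Matrix.diagonal d + Matrix.of fun i j : Fin (m + 2) =>
      if j = i + 1 then (1 : ZMod 2) else 0 with hA
  have one_ne : (1 : Fin (m + 2)) ≠ 0 := fin_one_ne_zero m
  have hAentry : ∀ i j : Fin (m + 2),
      A i j = (if i = j then d i else 0) + (if j = i + 1 then 1 else 0) := by
    intro i j; simp [hA, Matrix.diagonal, Matrix.add_apply]
  rw [Matrix.det_apply]
  have hzero : ∀ σ ∈ (univ : Finset (Equiv.Perm (Fin (m + 2)))),
      σ ∉ ({1, Equiv.subRight 1} : Finset (Equiv.Perm (Fin (m + 2)))) →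
      (Equiv.Perm.sign σ • ∏ i, A (σ i) i) = 0 := by
    intro σ _ hσ
    simp only [Finset.mem_insert, Finset.mem_singleton] at hσ
    push_neg at hσ
    have hnot : ¬ ∀ i, σ i = i ∨ σ i = i - 1 := by
      intro hall
      rcases perm_classify m σ hall with h | h
      · exact hσ.1 h
      · exact hσ.2 h
    push_neg at hnot
    obtain ⟨i, hi1, hi2⟩ := hnot
    have hAi : A (σ i) i = 0 := by
      rw [hAentry, if_neg hi1, if_neg, add_zero]
      intro h
      exact hi2 (eq_sub_of_add_eq h.symm)
    rw [Finset.prod_eq_zero (f := fun x => A (σ x) x) (Finset.mem_univ i) hAi, smul_zero]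
  rw [← Finset.sum_subset (Finset.subset_univ _) hzero]
  have hne : (1 : Equiv.Perm (Fin (m + 2))) ≠ Equiv.subRight 1 := by
    intro h
    have h0 := congrArg (fun σ : Equiv.Perm (Fin (m + 2)) => σ 0) h
    simp only [Equiv.Perm.one_apply, Equiv.subRight_apply] at h0
    exact one_ne (sub_eq_self.mp h0.symm)
  rw [Finset.sum_pair hne]
  have h1 : (Equiv.Perm.sign (1 : Equiv.Perm (Fin (m + 2))) •
      ∏ i, A ((1 : Equiv.Perm (Fin (m + 2))) i) i) = ∏ i, d i := by
    rw [units_smul_zmod2]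
    apply Finset.prod_congr rfl
    intro i _
    rw [Equiv.Perm.one_apply, hAentry, if_pos rfl, if_neg, add_zero]
    intro h
    exact one_ne (left_eq_add.mp h)
  have h2 : (Equiv.Perm.sign (Equiv.subRight (1 : Fin (m + 2))) •
      ∏ i, A (Equiv.subRight (1 : Fin (m + 2)) i) i) = 1 := by
    rw [units_smul_zmod2]
    have hone : ∀ i : Fin (m + 2), A (i - 1) i = 1 := by
      intro i
      rw [hAentry, if_neg, if_pos (by ring), zero_add]
      intro h
      exact one_ne (sub_eq_self.mp h)
    simp only [Equiv.subRight_apply, hone, Finset.prod_const_one]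
  rw [h1, h2]

theorem stmt_7 (n : ℕ) (hn : 2 ≤ n) (M : Matrix (Fin n) (Fin n) (ZMod 2)) :
    ∃ A B : Matrix (Fin n) (Fin n) (ZMod 2), A.det ≠ 0 ∧ B.det ≠ 0 ∧ M = A + B := by
  obtain ⟨m, rfl⟩ : ∃ m, n = m + 2 := ⟨n - 2, by omega⟩
  obtain ⟨L, L', D, hM⟩ := Matrix.Pivot.exists_list_transvec_mul_diagonal_mul_list_transvec M
  set E := (L.map Matrix.TransvectionStruct.toMatrix).prod with hE
  set F := (L'.map Matrix.TransvectionStruct.toMatrix).prod with hF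
  set S : Matrix (Fin (m + 2)) (Fin (m + 2)) (ZMod 2) :=
    Matrix.of fun i j : Fin (m + 2) => if j = i + 1 then (1 : ZMod 2) else 0 with hS
  set a : Fin (m + 2) → ZMod 2 := Function.update D 0 0 with ha
  set b : Fin (m + 2) → ZMod 2 := Function.update (0 : Fin (m + 2) → ZMod 2) 0 (D 0) with hb
  refine ⟨E * (Matrix.diagonal a + S) * F, E * (Matrix.diagonal b + S) * F, ?_, ?_, ?_⟩
  · rw [Matrix.det_mul, Matrix.det_mul, Matrix.TransvectionStruct.det_toMatrix_prod,
      Matrix.TransvectionStruct.det_toMatrix_prod, circ_det]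
    have : ∏ i, a i = 0 :=
      Finset.prod_eq_zero (Finset.mem_univ 0) (by simp [ha])
    rw [this]
    simp
  · rw [Matrix.det_mul, Matrix.det_mul, Matrix.TransvectionStruct.det_toMatrix_prod,
      Matrix.TransvectionStruct.det_toMatrix_prod, circ_det]
    have : ∏ i, b i = 0 :=
      Finset.prod_eq_zero (Finset.mem_univ 1)
        (by simp [hb, Function.update_apply, fin_one_ne_zero m])
    rw [this]
    simp
  · rw [hM, ← Matrix.add_mul, ← Matrix.mul_add]
    have hkey : Matrix.diagonal a + S + (Matrix.diagonal b + S) = Matrix.diagonal D := by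
      have habfun : (fun i => a i + b i) = D := by
        funext i
        by_cases hi : i = 0
        · subst hi; simp [ha, hb, Pi.add_apply]
        · simp [ha, hb, Pi.add_apply, Function.update_apply, hi]
      have hab : Matrix.diagonal a + Matrix.diagonal b = Matrix.diagonal D := by
        rw [Matrix.diagonal_add]; exact congrArg Matrix.diagonal habfun
      have hSS : S + S = 0 := by
        ext i j
        simp only [Matrix.add_apply, hS, Matrix.of_apply, Matrix.zero_apply]
        exact CharTwo.add_self_eq_zero _
      calc Matrix.diagonal a + S + (Matrix.diagonal b + S)
          = Matrix.diagonal a + Matrix.diagonal b + (S + S) := by abel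
        _ = Matrix.diagonal D := by rw [hab, hSS, add_zero]
    rw [hkey]
end

section
/- Let q be a prime power and n ≥ 1, and assume it is not the case that both n = 1 and q = 2. Then every matrix in Mat_n(F_q) can be written as a sum of two invertible matrices. -/
open Matrix Equiv

lemma my_permMatrix_apply {n : ℕ} (F : Type*) [Field F] (σ : Equiv.Perm (Fin n)) (a b : Fin n) :
    (σ.permMatrix F) a b = if σ a = b then (1:F) else 0 := by
  simp [Equiv.Perm.permMatrix, PEquiv.toMatrix_apply, Equiv.toPEquiv_apply]

lemma my_rot_inv_apply {m : ℕ} (i : Fin (m+2)) : (finRotate (m+2))⁻¹ i = i - 1 := by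
  apply (finRotate (m+2)).injective
  rw [Equiv.Perm.coe_inv, Equiv.apply_symm_apply, finRotate_succ_apply, sub_add_cancel]

open Fin.NatCast in
lemma my_perm_eq_of {m : ℕ} (τ : Equiv.Perm (Fin (m+2)))
    (hτ : ∀ i, τ i = i ∨ τ i = i - 1) : τ = 1 ∨ τ = (finRotate (m+2))⁻¹ := by
  by_cases h1 : τ = 1
  · exact Or.inl h1
  right
  obtain ⟨i₀, hi₀⟩ : ∃ i₀, τ i₀ ≠ i₀ := by
    by_contra hc; push_neg at hc; exact h1 (Equiv.ext hc)
  have hi0 : τ i₀ = i₀ - 1 := (hτ i₀).resolve_left hi₀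
  have key : ∀ k : ℕ, τ (i₀ - (k : Fin (m+2))) = i₀ - (k : Fin (m+2)) - 1 := by
    intro k
    induction k with
    | zero => simpa using hi0
    | succ k ih =>
      have hk1 : ((k+1 : ℕ) : Fin (m+2)) = (k : Fin (m+2)) + 1 := by push_cast; ring
      rw [hk1, show i₀ - ((k:Fin (m+2)) + 1) = i₀ - (k:Fin (m+2)) - 1 by abel]
      rcases hτ (i₀ - (k:Fin (m+2)) - 1) with hh | hh
      · exfalso
        have heq := τ.injective (hh.trans ih.symm)
        have : (1 : Fin (m+2)) = 0 := sub_eq_self.mp heq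
        simp at this
      · exact hh
  refine Equiv.ext fun i => ?_
  have hrep : i₀ - (((i₀ - i).val : ℕ) : Fin (m+2)) = i := by
    rw [Fin.cast_val_eq_self]; abel
  rw [my_rot_inv_apply, ← hrep]
  exact key _

lemma my_det_diag_add_rot {m : ℕ} (F : Type*) [Field F] (d : Fin (m+2) → F) (c : F) :
    (Matrix.diagonal d + c • (finRotate (m+2)).permMatrix F).det
      = (∏ i, d i) + (-1)^(m+1) * c^(m+2) := by
  classical
  set σ0 := finRotate (m+2) with hσ0
  set ρ := σ0⁻¹ with hρ
  set A := Matrix.diagonal d + c • σ0.permMatrix F with hA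
  have hent : ∀ a b, A a b = (if a = b then d b else 0) + (if σ0 a = b then c else 0) := by
    intro a b
    rw [hA, Matrix.add_apply, Matrix.smul_apply, my_permMatrix_apply, Matrix.diagonal_apply]
    by_cases hab : a = b <;> simp [hab]
  have h1ρ : (1 : Equiv.Perm (Fin (m+2))) ≠ ρ := by
    intro hcon
    have : (0 : Fin (m+2)) = 0 - 1 := by
      conv_lhs => rw [show (0 : Fin (m+2)) = (1 : Equiv.Perm (Fin (m+2))) 0 from rfl, hcon,
        hρ, my_rot_inv_apply]
    have h10 : (1 : Fin (m+2)) = 0 := sub_eq_self.mp this.symm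
    simp at h10
  rw [Matrix.det_apply]
  rw [← Finset.sum_subset (Finset.subset_univ ({1, ρ} : Finset (Equiv.Perm (Fin (m+2)))))]
  · rw [Finset.sum_pair h1ρ]
    have ht1 : ∀ i, A ((1 : Equiv.Perm (Fin (m+2))) i) i = d i := by
      intro i
      rw [show (1 : Equiv.Perm (Fin (m+2))) i = i from rfl, hent]
      have : ¬ (σ0 i = i) := by
        rw [hσ0, finRotate_succ_apply]
        intro hcon
        have := add_eq_left.mp hcon
        simp at this
      simp [this]
    have htρ : ∀ i, A (ρ i) i = c := by
      intro i
      rw [hent]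
      have h1 : ¬ (ρ i = i) := by
        rw [hρ, my_rot_inv_apply]
        intro hcon
        have : (1 : Fin (m+2)) = 0 := sub_eq_self.mp hcon
        simp at this
      have h2 : σ0 (ρ i) = i := by rw [hρ, Equiv.Perm.coe_inv, Equiv.apply_symm_apply]
      simp [h1, h2]
    have hsρ : Equiv.Perm.sign ρ = (-1 : ℤˣ)^(m+1) := by
      rw [hρ, Equiv.Perm.sign_inv, hσ0, sign_finRotate]
      rfl
    have hp1 : ∏ i, A ((1 : Equiv.Perm (Fin (m+2))) i) i = ∏ i, d i :=
      Finset.prod_congr rfl (fun i _ => ht1 i)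
    have hp2 : ∏ i, A (ρ i) i = c^(m+2) := by
      rw [Finset.prod_congr rfl (fun i _ => htρ i), Finset.prod_const, Finset.card_univ,
        Fintype.card_fin]
    rw [hp1, hp2, hsρ, Equiv.Perm.sign_one, one_smul, Units.smul_def,
      Units.val_pow_eq_pow_val, Units.val_neg, Units.val_one, zsmul_eq_mul]
    push_cast
    ring
  · intro τ _ hτmem
    have hτ1 : τ ≠ 1 := fun hc => hτmem (by simp [hc])
    have hτρ : τ ≠ ρ := fun hc => hτmem (by simp [hc])
    have hex : ∃ i, τ i ≠ i ∧ τ i ≠ i - 1 := by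
      by_contra hc
      push_neg at hc
      have : ∀ i, τ i = i ∨ τ i = i - 1 := by
        intro i
        by_cases hi : τ i = i
        · exact Or.inl hi
        · exact Or.inr (hc i hi)
      rcases my_perm_eq_of τ this with h | h
      · exact hτ1 h
      · exact hτρ (h.trans hρ.symm)
    obtain ⟨i, hne1, hne2⟩ := hex
    have hzero : A (τ i) i = 0 := by
      rw [hent]
      have hd : ¬ (τ i = i) := hne1
      have hp : ¬ (σ0 (τ i) = i) := by
        intro hcon
        apply hne2
        have h' : τ i = σ0⁻¹ i := σ0.injective (by rw [Equiv.Perm.coe_inv, Equiv.apply_symm_apply]; exact hcon)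
        rw [h']
        exact my_rot_inv_apply i
      simp [hd, hp]
    have hz : ∏ j, A (τ j) j = 0 := Finset.prod_eq_zero (Finset.mem_univ i) hzero
    rw [hz]
    simp

lemma my_diag_decomp {m : ℕ} (F : Type*) [Field F] (d : Fin (m+2) → F) :
    ∃ A B : Matrix (Fin (m+2)) (Fin (m+2)) F,
      A.det ≠ 0 ∧ B.det ≠ 0 ∧ Matrix.diagonal d = A + B := by
  classical
  set e : Fin (m+2) → F := fun i => if i = 0 then d 0 else 0 with he
  set Pm := (finRotate (m+2)).permMatrix F with hPm
  refine ⟨Matrix.diagonal e + (1:F) • Pm, Matrix.diagonal (d - e) + (-1:F) • Pm, ?_, ?_, ?_⟩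
  · rw [hPm, my_det_diag_add_rot]
    have h10 : (1 : Fin (m+2)) ≠ 0 := by simp
    have hpe : ∏ i, e i = 0 :=
      Finset.prod_eq_zero (Finset.mem_univ 1) (by simp [he, h10])
    rw [hpe, zero_add, one_pow, mul_one]
    exact pow_ne_zero _ (by norm_num)
  · rw [hPm, my_det_diag_add_rot]
    have hpe : ∏ i, (d - e) i = 0 :=
      Finset.prod_eq_zero (Finset.mem_univ 0) (by simp [he])
    rw [hpe, zero_add]
    have hodd : (-1:F)^(m+1) * (-1:F)^(m+2) = -1 := by
      rw [← pow_add]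
      exact Odd.neg_one_pow ⟨m+1, by ring⟩
    rw [hodd]
    norm_num
  · have hdiag : Matrix.diagonal e + Matrix.diagonal (d - e) = Matrix.diagonal d := by
      rw [Matrix.diagonal_add]
      funext i
      simp
    have hP0 : (1:F) • Pm + (-1:F) • Pm = 0 := by
      rw [← add_smul]
      norm_num
    calc Matrix.diagonal d
        = (Matrix.diagonal e + Matrix.diagonal (d - e)) + ((1:F) • Pm + (-1:F) • Pm) := by
          rw [hdiag, hP0, add_zero]
      _ = (Matrix.diagonal e + (1:F) • Pm) + (Matrix.diagonal (d - e) + (-1:F) • Pm) := by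
          abel

theorem stmt_8 (F : Type) [Field F] [Fintype F] (n : ℕ) (hn : 1 ≤ n)
    (h : ¬(n = 1 ∧ Fintype.card F = 2)) (M : Matrix (Fin n) (Fin n) F) :
    ∃ A B : Matrix (Fin n) (Fin n) F, A.det ≠ 0 ∧ B.det ≠ 0 ∧ M = A + B := by
  classical
  rcases n with _ | n
  · exact absurd hn (by norm_num)
  rcases n with _ | m
  · -- n = 1
    have hc2 : Fintype.card F ≠ 2 := fun hc => h ⟨rfl, hc⟩
    have h2 : 1 < Fintype.card F := Fintype.one_lt_card
    have h3 : 3 ≤ Fintype.card F := by omega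
    obtain ⟨a, ha0, haM⟩ : ∃ a : F, a ≠ 0 ∧ a ≠ M 0 0 := by
      by_contra hc
      push_neg at hc
      have hsub : (Finset.univ : Finset F) ⊆ {0, M 0 0} := by
        intro x _
        simp only [Finset.mem_insert, Finset.mem_singleton]
        by_cases hx : x = 0
        · exact Or.inl hx
        · exact Or.inr (hc x hx)
      have hcard := Finset.card_le_card hsub
      have hle : ({0, M 0 0} : Finset F).card ≤ 2 :=
        (Finset.card_insert_le _ _).trans (by simp)
      rw [Finset.card_univ] at hcard
      omega
    refine ⟨Matrix.diagonal (fun _ => a), M - Matrix.diagonal (fun _ => a), ?_, ?_, by abel⟩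
    · rw [Matrix.det_fin_one]
      simpa using ha0
    · rw [Matrix.det_fin_one]
      simp only [Matrix.sub_apply, Matrix.diagonal_apply_eq]
      exact sub_ne_zero.mpr (Ne.symm haM)
  · -- n = m + 2
    obtain ⟨L, L', d, hM⟩ := Matrix.Pivot.exists_list_transvec_mul_diagonal_mul_list_transvec M
    obtain ⟨A₀, B₀, hA, hB, hD⟩ := my_diag_decomp F d
    set P := (L.map Matrix.TransvectionStruct.toMatrix).prod with hPdef
    set Q := (L'.map Matrix.TransvectionStruct.toMatrix).prod with hQdef
    have hP : P.det = 1 := Matrix.TransvectionStruct.det_toMatrix_prod L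
    have hQ : Q.det = 1 := Matrix.TransvectionStruct.det_toMatrix_prod L'
    refine ⟨P * A₀ * Q, P * B₀ * Q, ?_, ?_, ?_⟩
    · rw [Matrix.det_mul, Matrix.det_mul, hP, hQ, one_mul, mul_one]
      exact hA
    · rw [Matrix.det_mul, Matrix.det_mul, hP, hQ, one_mul, mul_one]
      exact hB
    · rw [hM, hD, Matrix.mul_add, Matrix.add_mul]
end

section
/- Let R be a finite ring with identity whose cardinality is odd. Then every element of R can be written as a sum of two units of R. -/
/-- Odd divisor of odd number. -/
lemma odd_of_dvd_odd {d n : ℕ} (h : d ∣ n) (hn : Odd n) : Odd d := by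
  rcases Nat.even_or_odd d with he | ho
  · have h2 : 2 ∣ n := he.two_dvd.trans h
    rw [Nat.odd_iff] at hn
    omega
  · exact ho

/-- In a finite commutative ring of odd cardinality, every element is a sum of two units. -/
lemma comm_sum_two_units (S : Type*) [CommRing S] [Finite S] (hodd : Odd (Nat.card S))
    (x : S) : ∃ u v : S, IsUnit u ∧ IsUnit v ∧ x = u + v := by
  classical
  have hIdeals : Finite (Ideal S) :=
    Finite.of_injective (fun I : Ideal S => (I : Set S)) SetLike.coe_injective
  set ι := {I : Ideal S // I.IsMaximal} with hι
  have : Finite ι := Subtype.finite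
  -- residue choice in each quotient
  have hchoice : ∀ m : ι, ∃ a : S ⧸ m.1, a ≠ 0 ∧ a ≠ Ideal.Quotient.mk m.1 x := by
    intro m
    haveI : m.1.IsMaximal := m.2
    have hfin : Finite (S ⧸ m.1) := Quotient.finite _
    have hdvd : Nat.card (S ⧸ m.1) ∣ Nat.card S :=
      AddSubgroup.card_dvd_of_surjective (Ideal.Quotient.mk m.1).toAddMonoidHom
        Ideal.Quotient.mk_surjective
    have hoddq : Odd (Nat.card (S ⧸ m.1)) := odd_of_dvd_odd hdvd hodd
    haveI : Nontrivial (S ⧸ m.1) := Ideal.Quotient.nontrivial_iff.mpr m.2.ne_top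
    haveI : Fintype (S ⧸ m.1) := Fintype.ofFinite _
    have h2 : 2 ≤ Nat.card (S ⧸ m.1) := by
      rw [Nat.card_eq_fintype_card]; exact Fintype.one_lt_card
    have h3 : 3 ≤ Nat.card (S ⧸ m.1) := by
      rcases hoddq with ⟨k, hk⟩; omega
    by_contra hcon
    push_neg at hcon
    have hsub : (Finset.univ : Finset (S ⧸ m.1)) ⊆ {0, Ideal.Quotient.mk m.1 x} := by
      intro b _
      by_cases hb : b = 0
      · simp [hb]
      · simp [hcon b hb]
    have hcard : Nat.card (S ⧸ m.1) ≤ 2 := by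
      rw [Nat.card_eq_fintype_card, ← Finset.card_univ]
      calc Finset.univ.card ≤ ({0, Ideal.Quotient.mk m.1 x} : Finset (S ⧸ m.1)).card :=
            Finset.card_le_card hsub
        _ ≤ 2 := Finset.card_insert_le _ _ |>.trans (by simp)
    omega
  choose a ha0 hax using hchoice
  -- CRT
  have hpair : Pairwise fun i j : ι => IsCoprime i.1 j.1 := by
    intro i j hij
    exact (Ideal.isCoprime_iff_sup_eq).mpr (Ideal.IsMaximal.coprime_of_ne i.2 j.2 (fun h => hij (Subtype.ext h)))
  obtain ⟨u, hu⟩ := Ideal.pi_quotient_surjective hpair a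
  have hunit : ∀ y : S, (∀ m : ι, Ideal.Quotient.mk m.1 y ≠ 0) → IsUnit y := by
    intro y hy
    by_contra hny
    obtain ⟨M, hM, hyM⟩ := exists_max_ideal_of_mem_nonunits (mem_nonunits_iff.mpr hny)
    exact hy ⟨M, hM⟩ ((Ideal.Quotient.eq_zero_iff_mem).mpr hyM)
  refine ⟨u, x - u, hunit u ?_, hunit (x - u) ?_, by ring⟩
  · intro m
    rw [show (Ideal.Quotient.mk m.1) u = a m from hu m]
    exact ha0 m
  · intro m
    rw [map_sub, show (Ideal.Quotient.mk m.1) u = a m from hu m]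
    intro h
    exact hax m (by linear_combination -h)

theorem stmt_9 (R : Type) [Ring R] [Fintype R] (hodd : Odd (Fintype.card R))
    (r : R) : ∃ u v : Rˣ, r = (u : R) + (v : R) := by
  classical
  set S := Subring.closure ({r} : Set R) with hS
  letI : CommRing S := Subring.closureCommRingOfComm (by
    rintro x hx y hy
    rw [Set.mem_singleton_iff] at hx hy
    subst hx; subst hy; rfl)
  have hrS : r ∈ S := Subring.subset_closure (Set.mem_singleton r)
  have hdvd : Nat.card S ∣ Nat.card R :=
    AddSubgroup.card_addSubgroup_dvd_card S.toAddSubgroup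
  have hoddS : Odd (Nat.card S) := by
    refine odd_of_dvd_odd hdvd ?_
    rwa [Nat.card_eq_fintype_card]
  obtain ⟨u, v, hu, hv, huv⟩ := comm_sum_two_units S hoddS ⟨r, hrS⟩
  have hu' : IsUnit ((u : R)) := hu.map S.subtype
  have hv' : IsUnit ((v : R)) := hv.map S.subtype
  refine ⟨hu'.unit, hv'.unit, ?_⟩
  have := congrArg (Subtype.val) huv
  simpa using this
end

section
/- Let q be a prime power and n ≥ 1. The adjacency matrix (over ℂ) of the unit-graph on Mat_n(F_q) has at most n + 1 distinct eigenvalues; that is, the set of roots in ℂ of its characteristic polynomial has cardinality at most n + 1. -/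
open scoped Classical

/-- The unit-graph on `Mat_n(F)`: distinct matrices `A` and `B` are adjacent
if and only if `B - A` is invertible. -/
def unitGraph (n : ℕ) (F : Type) [Field F] [Fintype F] :
    SimpleGraph (Matrix (Fin n) (Fin n) F) where
  Adj A B := A ≠ B ∧ IsUnit (B - A)
  symm := by
    constructor
    intro A B h
    exact ⟨h.1.symm, by rw [← neg_sub]; exact h.2.neg⟩
  loopless := by
    constructor
    intro A h
    exact h.1 rfl

section UG
variable {F : Type} [Field F] [Fintype F] [DecidableEq F] {n : ℕ}

/-- eigenvalue function -/
noncomputable def ugLam (ψ : AddChar F ℂ) (M : Matrix (Fin n) (Fin n) F) : ℂ :=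
  ∑ U ∈ Finset.univ.filter (fun U : Matrix (Fin n) (Fin n) F => IsUnit U),
    ψ (Matrix.trace (M * U))

theorem ug_orth (ψ : AddChar F ℂ) (hψ : ∀ c : F, c ≠ 0 → ∃ b : F, ψ (c * b) ≠ 1)
    (M : Matrix (Fin n) (Fin n) F) (hM : M ≠ 0) :
    ∑ A : Matrix (Fin n) (Fin n) F, ψ (Matrix.trace (M * A)) = 0 := by
  -- find A₀ with ψ (trace (M * A₀)) ≠ 1
  obtain ⟨i, j, hij⟩ : ∃ i j, M i j ≠ 0 := by
    by_contra h; push_neg at h; exact hM (by ext i j; simp [h])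
  obtain ⟨b, hb⟩ := hψ (M i j) hij
  have htr : Matrix.trace (M * Matrix.single j i b) = M i j * b := by
    simp only [Matrix.trace, Matrix.diag, Matrix.mul_apply, Matrix.single,
      Matrix.of_apply, mul_ite, mul_zero, mul_one]
    rw [Finset.sum_comm]
    simp [ite_and, Finset.sum_ite_eq, mul_comm]
  set A₀ := Matrix.single j i b with hA₀
  have key : ∀ A : Matrix (Fin n) (Fin n) F,
      ψ (Matrix.trace (M * (A₀ + A))) = ψ (M i j * b) * ψ (Matrix.trace (M * A)) := by
    intro A
    rw [Matrix.mul_add, Matrix.trace_add, AddChar.map_add_eq_mul, htr]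
  have hshift : ∑ A : Matrix (Fin n) (Fin n) F, ψ (Matrix.trace (M * A))
      = ∑ A : Matrix (Fin n) (Fin n) F, ψ (Matrix.trace (M * (A₀ + A))) :=
    (Fintype.sum_equiv (Equiv.addLeft A₀) _ _ (fun A => rfl)).symm
  simp_rw [key, ← Finset.mul_sum] at hshift
  by_contra hS
  exact hb (mul_right_cancel₀ hS (by rw [← hshift, one_mul]))
end UG

section UG2
variable {F : Type} [Field F] [Fintype F] [DecidableEq F] {n : ℕ}

/-- Fourier matrix -/
noncomputable def ugP (ψ : AddChar F ℂ) :
    Matrix (Matrix (Fin n) (Fin n) F) (Matrix (Fin n) (Fin n) F) ℂ :=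
  fun A M => ψ (Matrix.trace (M * A))

noncomputable def ugPinv (ψ : AddChar F ℂ) :
    Matrix (Matrix (Fin n) (Fin n) F) (Matrix (Fin n) (Fin n) F) ℂ :=
  fun M A => ψ (Matrix.trace (M * (-A)))

theorem ugP_left_inv (ψ : AddChar F ℂ) (hψ : ∀ c : F, c ≠ 0 → ∃ b : F, ψ (c * b) ≠ 1) :
    (ugPinv ψ : Matrix (Matrix (Fin n) (Fin n) F) (Matrix (Fin n) (Fin n) F) ℂ) * ugP ψ
      = (Fintype.card (Matrix (Fin n) (Fin n) F) : ℂ) • 1 := by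
  ext M M'
  rw [Matrix.mul_apply]
  have h : ∀ A : Matrix (Fin n) (Fin n) F,
      ugPinv ψ M A * ugP ψ A M' = ψ (Matrix.trace ((M' - M) * A)) := by
    intro A
    rw [ugP, ugPinv, ← AddChar.map_add_eq_mul]
    congr 1
    rw [Matrix.mul_neg, Matrix.trace_neg, Matrix.sub_mul, Matrix.trace_sub]
    ring
  simp_rw [h]
  by_cases hMM : M = M'
  · subst hMM
    simp [Matrix.smul_apply]
  · rw [ug_orth ψ hψ (M' - M) (sub_ne_zero.mpr (Ne.symm hMM))]
    simp [Matrix.one_apply, hMM, Matrix.smul_apply]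

theorem ugP_invertible (ψ : AddChar F ℂ) (hψ : ∀ c : F, c ≠ 0 → ∃ b : F, ψ (c * b) ≠ 1) :
    IsUnit (ugP ψ : Matrix (Matrix (Fin n) (Fin n) F) _ ℂ) := by
  have hcard : (Fintype.card (Matrix (Fin n) (Fin n) F) : ℂ) ≠ 0 := by
    exact_mod_cast Fintype.card_ne_zero
  have h := ugP_left_inv ψ hψ (n := n)
  have h2 : ((((Fintype.card (Matrix (Fin n) (Fin n) F) : ℂ))⁻¹ • ugPinv ψ)
      : Matrix (Matrix (Fin n) (Fin n) F) (Matrix (Fin n) (Fin n) F) ℂ) * ugP ψ = 1 := by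
    rw [Matrix.smul_mul, h, smul_smul, inv_mul_cancel₀ hcard, one_smul]
  have hdet := congrArg Matrix.det h2
  rw [Matrix.det_mul, Matrix.det_one] at hdet
  rw [Matrix.isUnit_iff_isUnit_det]
  exact isUnit_of_mul_isUnit_right (hdet ▸ isUnit_one)

theorem ug_AP (ψ : AddChar F ℂ) (hn : 1 ≤ n) :
    (unitGraph n F).adjMatrix ℂ * ugP ψ = ugP ψ * Matrix.diagonal (ugLam ψ) := by
  haveI : Nonempty (Fin n) := ⟨⟨0, hn⟩⟩
  ext x M
  rw [SimpleGraph.adjMatrix_mul_apply, Matrix.mul_diagonal]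
  rw [show (unitGraph n F).neighborFinset x
      = Finset.univ.filter (fun y => x ≠ y ∧ IsUnit (y - x)) by
    ext y; rw [Finset.mem_filter, SimpleGraph.mem_neighborFinset]; simp [unitGraph]]
  rw [ugLam, Finset.mul_sum]
  refine Finset.sum_nbij' (fun y => y - x) (fun u => x + u) ?_ ?_ ?_ ?_ ?_
  · intro y hy
    simp only [Finset.mem_filter, Finset.mem_univ, true_and] at hy ⊢
    exact hy.2
  · intro u hu
    simp only [Finset.mem_filter, Finset.mem_univ, true_and] at hu ⊢
    refine ⟨fun h => hu.ne_zero (by rw [← sub_eq_zero] at h ⊢; simpa using h.symm), by simpa using hu⟩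
  · intro y _; simp
  · intro u _; simp
  · intro y hy
    simp only [Finset.mem_filter, Finset.mem_univ, true_and] at hy
    rw [ugP, ugP, ← AddChar.map_add_eq_mul]
    congr 1
    rw [← Matrix.trace_add, ← Matrix.mul_add, add_sub_cancel]
end UG2

section CP
variable {m : Type} [Fintype m] [DecidableEq m]
open Polynomial

theorem my_charpoly_conj (P A : Matrix m m ℂ) (hP : IsUnit P) :
    (P * A * (↑hP.unit⁻¹ : Matrix m m ℂ)).charpoly = A.charpoly := by
  set Q : Matrix m m ℂ := ↑hP.unit⁻¹ with hQ
  have hPQ : P * Q = 1 := by simpa [hQ] using hP.unit.mul_inv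
  have hQP : Q * P = 1 := by simpa [hQ] using hP.unit.inv_mul
  have hmat : Matrix.charmatrix (P * A * Q)
      = (C : ℂ →+* ℂ[X]).mapMatrix P * Matrix.charmatrix A
        * (C : ℂ →+* ℂ[X]).mapMatrix Q := by
    rw [Matrix.charmatrix, Matrix.charmatrix, Matrix.mul_sub, Matrix.sub_mul]
    congr 1
    · rw [← (Matrix.scalar_commute (X : ℂ[X]) (fun r => Commute.all _ _)
        ((C : ℂ →+* ℂ[X]).mapMatrix P)).eq, Matrix.mul_assoc, ← RingHom.map_mul, hPQ]
      simp
    · rw [← RingHom.map_mul, ← RingHom.map_mul]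
  rw [Matrix.charpoly, Matrix.charpoly, hmat, Matrix.det_mul, Matrix.det_mul,
    mul_comm, ← mul_assoc, ← Matrix.det_mul, ← RingHom.map_mul, hQP]
  simp

theorem my_charpoly_diagonal (d : m → ℂ) :
    (Matrix.diagonal d).charpoly = ∏ i, (X - C (d i)) := by
  rw [Matrix.charpoly]
  have : Matrix.charmatrix (Matrix.diagonal d) = Matrix.diagonal (fun i => X - C (d i)) := by
    ext i j
    by_cases hij : i = j
    · subst hij; simp
    · simp [Matrix.charmatrix_apply_ne _ _ _ hij, Matrix.diagonal_apply_ne _ hij]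
  rw [this, Matrix.det_diagonal]

end CP

section LAM
variable {F : Type} [Field F] [Fintype F] [DecidableEq F] {n : ℕ}

theorem ugLam_mul_unit (ψ : AddChar F ℂ) (P Q M : Matrix (Fin n) (Fin n) F)
    (hP : IsUnit P) (hQ : IsUnit Q) : ugLam ψ (P * M * Q) = ugLam ψ M := by
  obtain ⟨p, rfl⟩ := hP
  obtain ⟨q, rfl⟩ := hQ
  rw [ugLam, ugLam]
  refine Finset.sum_nbij'
    (fun U => (↑q : Matrix (Fin n) (Fin n) F) * U * (↑p : Matrix (Fin n) (Fin n) F))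
    (fun V => (↑q⁻¹ : Matrix (Fin n) (Fin n) F) * V * (↑p⁻¹ : Matrix (Fin n) (Fin n) F))
    ?_ ?_ ?_ ?_ ?_
  · intro U hU
    simp only [Finset.mem_filter, Finset.mem_univ, true_and] at hU ⊢
    exact (q.isUnit.mul hU).mul p.isUnit
  · intro V hV
    simp only [Finset.mem_filter, Finset.mem_univ, true_and] at hV ⊢
    exact (q⁻¹.isUnit.mul hV).mul p⁻¹.isUnit
  · intro U _
    show (↑q⁻¹ : Matrix (Fin n) (Fin n) F) * ((↑q : Matrix (Fin n) (Fin n) F) * U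
      * (↑p : Matrix (Fin n) (Fin n) F)) * (↑p⁻¹ : Matrix (Fin n) (Fin n) F) = U
    rw [Matrix.mul_assoc (↑q : Matrix (Fin n) (Fin n) F) U (↑p : Matrix (Fin n) (Fin n) F),
      Units.inv_mul_cancel_left, Units.mul_inv_cancel_right]
  · intro V _
    show (↑q : Matrix (Fin n) (Fin n) F) * ((↑q⁻¹ : Matrix (Fin n) (Fin n) F) * V
      * (↑p⁻¹ : Matrix (Fin n) (Fin n) F)) * (↑p : Matrix (Fin n) (Fin n) F) = V
    rw [Matrix.mul_assoc (↑q⁻¹ : Matrix (Fin n) (Fin n) F) V (↑p⁻¹ : Matrix (Fin n) (Fin n) F),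
      Units.mul_inv_cancel_left, Units.inv_mul_cancel_right]
  · intro U _
    congr 1
    calc Matrix.trace ((↑p * M * ↑q) * U) = Matrix.trace (↑p * (M * (↑q * U))) := by
          rw [Matrix.mul_assoc, Matrix.mul_assoc]
      _ = Matrix.trace ((M * (↑q * U)) * ↑p) := Matrix.trace_mul_comm _ _
      _ = Matrix.trace (M * (↑q * U * ↑p)) := by rw [Matrix.mul_assoc]

theorem ugLam_diag_reduce (ψ : AddChar F ℂ) (M : Matrix (Fin n) (Fin n) F) :
    ∃ d : Fin n → F, ugLam ψ M = ugLam ψ (Matrix.diagonal d)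
      ∧ M.rank = (Matrix.diagonal d).rank := by
  obtain ⟨L, L', d, hM⟩ := Matrix.Pivot.exists_list_transvec_mul_diagonal_mul_list_transvec M
  have hL : IsUnit ((L.map Matrix.TransvectionStruct.toMatrix).prod) := by
    rw [Matrix.isUnit_iff_isUnit_det, Matrix.TransvectionStruct.det_toMatrix_prod]
    exact isUnit_one
  have hL' : IsUnit ((L'.map Matrix.TransvectionStruct.toMatrix).prod) := by
    rw [Matrix.isUnit_iff_isUnit_det, Matrix.TransvectionStruct.det_toMatrix_prod]
    exact isUnit_one
  refine ⟨d, ?_, ?_⟩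
  · rw [hM, ugLam_mul_unit ψ _ _ _ hL hL']
  · rw [hM, Matrix.mul_assoc,
      Matrix.rank_mul_eq_right_of_isUnit_det _ _ ((Matrix.isUnit_iff_isUnit_det _).mp hL),
      Matrix.rank_mul_eq_left_of_isUnit_det _ _ ((Matrix.isUnit_iff_isUnit_det _).mp hL')]

theorem ugLam_diag_indicator (ψ : AddChar F ℂ) (d : Fin n → F) :
    ugLam ψ (Matrix.diagonal d)
      = ugLam ψ (Matrix.diagonal (fun i => if d i ≠ 0 then (1 : F) else 0)) := by
  set u : Fin n → F := fun i => if d i ≠ 0 then d i else 1 with hu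
  have hud : Matrix.diagonal u * Matrix.diagonal (fun i => if d i ≠ 0 then (1 : F) else 0)
      = Matrix.diagonal d := by
    rw [Matrix.diagonal_mul_diagonal]
    exact congrArg Matrix.diagonal (funext fun i => by by_cases h : d i = 0 <;> simp [hu, h])
  have hUu : IsUnit (Matrix.diagonal u) := by
    rw [Matrix.isUnit_iff_isUnit_det, Matrix.det_diagonal]
    refine (Finset.prod_ne_zero_iff.mpr fun i _ => ?_).isUnit
    by_cases h : d i = 0 <;> simp [hu, h]
  conv_lhs => rw [← hud]
  have := ugLam_mul_unit ψ (Matrix.diagonal u)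
    (1 : Matrix (Fin n) (Fin n) F)
    (Matrix.diagonal (fun i => if d i ≠ 0 then (1 : F) else 0)) hUu isUnit_one
  rw [Matrix.mul_one] at this
  exact this

theorem ugLam_diag_perm (ψ : AddChar F ℂ) (w : Fin n → F) (σ : Equiv.Perm (Fin n)) :
    ugLam ψ (Matrix.diagonal (w ∘ σ)) = ugLam ψ (Matrix.diagonal w) := by
  rw [ugLam, ugLam]
  refine Finset.sum_nbij' (fun U => U.submatrix σ.symm σ.symm)
    (fun V => V.submatrix σ σ) ?_ ?_ ?_ ?_ ?_
  · intro U hU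
    simp only [Finset.mem_filter, Finset.mem_univ, true_and] at hU ⊢
    rw [Matrix.isUnit_iff_isUnit_det, Matrix.det_submatrix_equiv_self]
    rwa [Matrix.isUnit_iff_isUnit_det] at hU
  · intro V hV
    simp only [Finset.mem_filter, Finset.mem_univ, true_and] at hV ⊢
    rw [Matrix.isUnit_iff_isUnit_det, Matrix.det_submatrix_equiv_self]
    rwa [Matrix.isUnit_iff_isUnit_det] at hV
  · intro U _; ext i j; simp
  · intro V _; ext i j; simp
  · intro U _
    congr 1
    have h1 : ∀ (v : Fin n → F) (X : Matrix (Fin n) (Fin n) F),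
        Matrix.trace (Matrix.diagonal v * X) = ∑ i, v i * X i i := by
      intro v X
      simp [Matrix.trace, Matrix.diag, Matrix.diagonal_mul]
    rw [h1, h1]
    exact Fintype.sum_equiv σ _ _ (fun i => by simp)

theorem subtypeCongr_prop {α : Type*} {p q : α → Prop} [DecidablePred p] [DecidablePred q]
    (e : {x // p x} ≃ {x // q x}) (f : {x // ¬ p x} ≃ {x // ¬ q x}) (a : α) :
    q (Equiv.subtypeCongr e f a) ↔ p a := by
  by_cases h : p a
  · have h2 : Equiv.subtypeCongr e f a = ↑(e ⟨a, h⟩) := by simp [Equiv.subtypeCongr, h]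
    rw [h2]; exact iff_of_true (e ⟨a, h⟩).2 h
  · have h2 : Equiv.subtypeCongr e f a = ↑(f ⟨a, h⟩) := by simp [Equiv.subtypeCongr, h]
    rw [h2]; exact iff_of_false (f ⟨a, h⟩).2 h

theorem ugLam_rank_eq (ψ : AddChar F ℂ) (M M' : Matrix (Fin n) (Fin n) F)
    (h : M.rank = M'.rank) : ugLam ψ M = ugLam ψ M' := by
  obtain ⟨d, hd1, hd2⟩ := ugLam_diag_reduce ψ M
  obtain ⟨d', hd1', hd2'⟩ := ugLam_diag_reduce ψ M'
  rw [hd1, hd1', ugLam_diag_indicator ψ d, ugLam_diag_indicator ψ d']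
  have hcard : Fintype.card {i // d i ≠ 0} = Fintype.card {i // d' i ≠ 0} := by
    have := hd2.symm.trans (h.trans hd2')
    rwa [Matrix.rank_diagonal, Matrix.rank_diagonal] at this
  have hcard2 : Fintype.card {i // ¬ d i ≠ 0} = Fintype.card {i // ¬ d' i ≠ 0} := by
    rw [Fintype.card_subtype_compl (fun i => d i ≠ 0),
      Fintype.card_subtype_compl (fun i => d' i ≠ 0), hcard]
  set σ : Equiv.Perm (Fin n) :=
    Equiv.subtypeCongr (Fintype.equivOfCardEq hcard.symm) (Fintype.equivOfCardEq hcard2.symm)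
    with hσdef
  have hσ : ∀ i, (d (σ i) ≠ 0 ↔ d' i ≠ 0) := fun i =>
    subtypeCongr_prop (Fintype.equivOfCardEq hcard.symm) (Fintype.equivOfCardEq hcard2.symm) i
  have hfun : (fun i => if d i ≠ 0 then (1 : F) else 0) ∘ σ
      = fun i => if d' i ≠ 0 then (1 : F) else 0 := by
    funext i
    simp only [Function.comp]
    by_cases h : d' i ≠ 0
    · rw [if_pos ((hσ i).mpr h), if_pos h]
    · rw [if_neg (fun hc => h ((hσ i).mp hc)), if_neg h]
  rw [← hfun]
  exact (ugLam_diag_perm ψ _ σ).symm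

end LAM

open Polynomial

theorem stmt_11 (F : Type) [Field F] [Fintype F] [DecidableEq F] (n : ℕ) (hn : 1 ≤ n) :
    ((unitGraph n F).adjMatrix ℂ).charpoly.roots.toFinset.card ≤ n + 1 := by
  haveI : Nonempty (Fin n) := ⟨⟨0, hn⟩⟩
  have hp : (ringChar F).Prime := CharP.char_is_prime F _
  haveI : NeZero (ringChar F) := ⟨hp.ne_zero⟩
  letI : Algebra (ZMod (ringChar F)) F := ZMod.algebra F (ringChar F)
  set ψ : AddChar F ℂ := (ZMod.stdAddChar (N := ringChar F)).compAddMonoidHom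
    (Algebra.trace (ZMod (ringChar F)) F).toAddMonoidHom with hψdef
  have hψ : ∀ c : F, c ≠ 0 → ∃ b : F, ψ (c * b) ≠ 1 := by
    intro c hc
    obtain ⟨b, hb⟩ := FiniteField.trace_to_zmod_nondegenerate F hc
    refine ⟨b, fun hcon => hb ?_⟩
    have h2 : ZMod.stdAddChar ((Algebra.trace (ZMod (ringChar F)) F) (c * b))
        = ZMod.stdAddChar (0 : ZMod (ringChar F)) := by
      rw [AddChar.map_zero_eq_one]
      exact hcon
    exact ZMod.injective_stdAddChar h2
  have hPunit := ugP_invertible ψ hψ (n := n)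
  have hAP := ug_AP ψ hn
  have hA : (unitGraph n F).adjMatrix ℂ
      = ugP ψ * Matrix.diagonal (ugLam ψ) * (↑hPunit.unit⁻¹ : Matrix (Matrix (Fin n) (Fin n) F) (Matrix (Fin n) (Fin n) F) ℂ) := by
    have h1 : (unitGraph n F).adjMatrix ℂ * ((↑hPunit.unit : Matrix (Matrix (Fin n) (Fin n) F) (Matrix (Fin n) (Fin n) F) ℂ) * (↑hPunit.unit⁻¹ : Matrix (Matrix (Fin n) (Fin n) F) (Matrix (Fin n) (Fin n) F) ℂ))
        = ugP ψ * Matrix.diagonal (ugLam ψ) * (↑hPunit.unit⁻¹ : Matrix (Matrix (Fin n) (Fin n) F) (Matrix (Fin n) (Fin n) F) ℂ) := by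
      rw [← Matrix.mul_assoc, IsUnit.unit_spec, hAP]
    rwa [Units.mul_inv, Matrix.mul_one] at h1
  rw [hA, my_charpoly_conj _ _ hPunit, my_charpoly_diagonal]
  set lam : Matrix (Fin n) (Fin n) F → ℂ := ugLam ψ with hlam
  -- roots of the product
  have hroots : (∏ M : Matrix (Fin n) (Fin n) F, (X - C (lam M))).roots
      = (Finset.univ : Finset (Matrix (Fin n) (Fin n) F)).val.map lam := by
    rw [show (∏ M : Matrix (Fin n) (Fin n) F, (X - C (lam M)))
        = (((Finset.univ : Finset (Matrix (Fin n) (Fin n) F)).val.map lam).map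
            (fun a : ℂ => X - C a)).prod by
      rw [Multiset.map_map]; rfl]
    exact roots_multiset_prod_X_sub_C _
  rw [hroots]
  have himg : ((Finset.univ : Finset (Matrix (Fin n) (Fin n) F)).val.map lam).toFinset
      = Finset.image lam Finset.univ := rfl
  rw [himg]
  -- factor through rank
  set h : ℕ → ℂ := fun k =>
    if hk : ∃ M : Matrix (Fin n) (Fin n) F, M.rank = k then lam hk.choose else 0 with hh
  have hfac : ∀ M : Matrix (Fin n) (Fin n) F, lam M = h M.rank := by
    intro M
    have hk : ∃ M' : Matrix (Fin n) (Fin n) F, M'.rank = M.rank := ⟨M, rfl⟩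
    rw [hh]
    simp only [dif_pos hk]
    exact (ugLam_rank_eq ψ _ M hk.choose_spec).symm
  have himg2 : Finset.image lam Finset.univ
      = Finset.image h (Finset.image Matrix.rank
          (Finset.univ : Finset (Matrix (Fin n) (Fin n) F))) := by
    rw [Finset.image_image]
    exact Finset.image_congr (fun M _ => hfac M)
  rw [himg2]
  calc (Finset.image h (Finset.image Matrix.rank
          (Finset.univ : Finset (Matrix (Fin n) (Fin n) F)))).card
      ≤ (Finset.image Matrix.rank (Finset.univ
          : Finset (Matrix (Fin n) (Fin n) F))).card := Finset.card_image_le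
    _ ≤ (Finset.range (n + 1)).card := by
        refine Finset.card_le_card ?_
        intro k hk
        simp only [Finset.mem_image] at hk
        obtain ⟨M, _, rfl⟩ := hk
        rw [Finset.mem_range, Nat.lt_succ_iff]
        exact Matrix.rank_le_width M
    _ = n + 1 := Finset.card_range _
end

section
/- Let q be a prime power. The unit-graph on Mat_2(F_q) is a strongly regular graph with parameters (q⁴, q⁴ − q³ − q² + q, q⁴ − 2q³ − q² + 3q, q⁴ − 2q³ + q); that is, it has q⁴ vertices, every vertex has degree q⁴ − q³ − q² + q, every pair of distinct adjacent vertices has exactly q⁴ − 2q³ − q² + 3q common neighbors, and every pair of distinct nonadjacent vertices has exactly q⁴ − 2q³ + q common neighbors. -/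
open scoped Classical

open Finset

variable {F : Type} [Field F] [Fintype F] [DecidableEq F]

lemma fiber_count (t : F) :
    (∑ x : F, ∑ y : F, if x * y = t then 1 else 0) =
      if t = 0 then 2 * Fintype.card F - 1 else Fintype.card F - 1 := by
  have hq : 1 ≤ Fintype.card F := Fintype.card_pos
  by_cases ht : t = 0
  · subst ht
    simp only [if_pos rfl]
    have h1 : ∀ x : F, (∑ y : F, if x * y = 0 then (1:ℕ) else 0) =
        if x = 0 then Fintype.card F else 1 := by
      intro x
      by_cases hx : x = 0
      · simp [hx]
      · have : ∀ y : F, (x * y = 0) = (y = 0) := by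
          intro y; simp [mul_eq_zero, hx]
        simp [this, hx]
    rw [Finset.sum_congr rfl fun x _ => h1 x]
    have h2 : ∀ x : F, (if x = 0 then Fintype.card F else 1)
        = (if x = 0 then Fintype.card F - 1 else 0) + 1 := by
      intro x; by_cases hx : x = 0 <;> simp [hx] <;> omega
    rw [Finset.sum_congr rfl fun x _ => h2 x, Finset.sum_add_distrib,
      Finset.sum_ite_eq' univ (0:F) (fun _ => Fintype.card F - 1)]
    simp only [mem_univ, if_pos, Finset.sum_const, card_univ, smul_eq_mul, mul_one]
    omega
  · rw [if_neg ht]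
    have h1 : ∀ x : F, (∑ y : F, if x * y = t then (1:ℕ) else 0) =
        if x = 0 then 0 else 1 := by
      intro x
      by_cases hx : x = 0
      · simp [hx, Ne.symm ht]
      · have : ∀ y : F, (x * y = t) = (y = x⁻¹ * t) := by
          intro y
          rw [eq_iff_iff]
          constructor
          · intro h; field_simp [hx, ← h]; linear_combination h
          · intro h; subst h; field_simp
        simp [this, hx]
    rw [Finset.sum_congr rfl fun x _ => h1 x]
    simp [Finset.sum_ite, Finset.filter_ne', Finset.card_erase_of_mem]

lemma card_exists (F : Type) [Fintype F] [Nonempty F] : ∃ r, Fintype.card F = r + 1 :=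
  ⟨Fintype.card F - 1, by have := Fintype.card_pos (α := F); omega⟩

lemma count_sing :
    (∑ b : F, ∑ c : F, ∑ a : F, ∑ d : F, if a * d = b * c then 1 else 0) =
      Fintype.card F ^ 3 + Fintype.card F ^ 2 - Fintype.card F := by
  obtain ⟨r, hr⟩ := card_exists F
  have h1 : ∀ b c : F, (∑ a : F, ∑ d : F, if a * d = b * c then (1:ℕ) else 0)
      = r + (if b * c = 0 then r + 1 else 0) := by
    intro b c
    rw [fiber_count (b * c)]
    by_cases h : b * c = 0 <;> simp [h, hr] <;> omega
  simp only [h1, Finset.sum_add_distrib, Finset.sum_const, card_univ, smul_eq_mul]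
  have h2 : (∑ b : F, ∑ c : F, if b * c = 0 then (r+1 : ℕ) else 0)
      = (r + 1) * (∑ b : F, ∑ c : F, if b * c = 0 then (1:ℕ) else 0) := by
    rw [Finset.mul_sum]
    refine Finset.sum_congr rfl fun b _ => ?_
    rw [Finset.mul_sum]
    refine Finset.sum_congr rfl fun c _ => ?_
    by_cases h : b * c = 0 <;> simp [h]
  rw [h2, fiber_count (0:F), if_pos rfl, hr]
  rw [show 2*(r+1)-1 = 2*r+1 from by omega]
  symm
  rw [Nat.sub_eq_iff_eq_add (by nlinarith)]
  ring

lemma count_trace :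
    (∑ a : F, ∑ d : F, ∑ b : F, ∑ c : F,
        if a * d = b * c ∧ a + d = 1 then 1 else 0) =
      Fintype.card F ^ 2 + Fintype.card F := by
  obtain ⟨r, hr⟩ := card_exists F
  have h1 : ∀ a d : F, (∑ b : F, ∑ c : F,
      if a * d = b * c ∧ a + d = 1 then (1:ℕ) else 0)
      = if d = 1 - a then (r + if a * d = 0 then r + 1 else 0) else 0 := by
    intro a d
    by_cases h : a + d = 1
    · have hd : d = 1 - a := by linear_combination h
      rw [if_pos hd]
      have : ∀ b c : F, (a * d = b * c ∧ a + d = 1) = (b * c = a * d) := by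
        intro b c; simp [h, eq_comm]
      simp only [this]
      rw [fiber_count (a * d)]
      by_cases h2 : a * d = 0 <;> simp [h2, hr] <;> omega
    · rw [if_neg (by intro hd; exact h (by rw [hd]; ring))]
      have : ∀ b c : F, (a * d = b * c ∧ a + d = 1) = False := by
        intro b c; simp [h]
      simp [this]
  simp only [h1]
  have h2 : ∀ a : F, (∑ d : F, if d = 1 - a then (r + if a * d = 0 then r + 1 else 0) else 0)
      = r + if a * (1 - a) = 0 then r + 1 else 0 := by
    intro a
    rw [Finset.sum_ite_eq' univ (1 - a) (fun d => r + if a * d = 0 then r + 1 else 0)]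
    simp
  simp only [h2, Finset.sum_add_distrib, Finset.sum_const, card_univ, smul_eq_mul, hr]
  have h3 : (∑ a : F, if a * (1 - a) = 0 then (r+1:ℕ) else 0)
      = ∑ a : F, ((if a = 0 then (r+1:ℕ) else 0) + (if a = 1 then (r+1:ℕ) else 0)) := by
    refine Finset.sum_congr rfl fun a _ => ?_
    rcases eq_or_ne a 0 with h0 | h0
    · simp [h0]
    rcases eq_or_ne a 1 with h4 | h4
    · simp [h4]
    · have : a * (1 - a) ≠ 0 := by
        simp [mul_eq_zero, h0, sub_eq_zero, Ne.symm h4]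
      simp [this, h0, h4]
  rw [h3, Finset.sum_add_distrib, Finset.sum_ite_eq' univ (0:F) (fun _ => r+1),
    Finset.sum_ite_eq' univ (1:F) (fun _ => r+1)]
  simp only [mem_univ, if_pos]
  ring

lemma count_E :
    (∑ a : F, ∑ b : F, ∑ c : F, ∑ d : F,
        if d = 0 ∧ b * c = 0 then 1 else 0) =
      2 * Fintype.card F ^ 2 - Fintype.card F := by
  obtain ⟨r, hr⟩ := card_exists F
  have h1 : ∀ b c : F, (∑ d : F, if d = 0 ∧ b * c = 0 then (1:ℕ) else 0)
      = if b * c = 0 then 1 else 0 := by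
    intro b c
    by_cases h : b * c = 0 <;> simp [h]
  simp only [h1]
  have h2 : (∑ b : F, ∑ c : F, if b * c = 0 then (1:ℕ) else 0) = 2 * (r + 1) - 1 := by
    rw [fiber_count (0:F), if_pos rfl, hr]
  simp only [h2, Finset.sum_const, card_univ, smul_eq_mul, hr]
  rw [show 2*(r+1)-1 = 2*r+1 from by omega]
  symm
  rw [Nat.sub_eq_iff_eq_add (by nlinarith)]
  ring

open Finset Matrix

variable {F : Type} [Field F] [Fintype F] [DecidableEq F]

abbrev M2 (F : Type) := Matrix (Fin 2) (Fin 2) F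

def entEquiv (F : Type) : (F × F × F × F) ≃ M2 F where
  toFun p := !![p.1, p.2.1; p.2.2.1, p.2.2.2]
  invFun M := (M 0 0, M 0 1, M 1 0, M 1 1)
  left_inv p := by rfl
  right_inv M := by
    ext i j
    fin_cases i <;> fin_cases j <;> rfl

lemma card_filter_eq_sum (p : M2 F → Prop) [DecidablePred p] :
    (univ.filter p).card =
      ∑ a : F, ∑ b : F, ∑ c : F, ∑ d : F, if p !![a, b; c, d] then 1 else 0 := by
  rw [Finset.card_filter]
  rw [← Equiv.sum_comp (entEquiv F) (fun M => if p M then (1:ℕ) else 0)]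
  rw [Fintype.sum_prod_type]
  refine Finset.sum_congr rfl fun a _ => ?_
  rw [Fintype.sum_prod_type]
  refine Finset.sum_congr rfl fun b _ => ?_
  rw [Fintype.sum_prod_type]
  rfl

lemma card_M2 : Fintype.card (M2 F) = Fintype.card F ^ 4 := by
  rw [← Fintype.card_congr (entEquiv F)]
  simp [Fintype.card_prod]
  ring

example (a b c d : F) : (!![a,b;c,d]).det = a * d - b * c := by
  simp [Matrix.det_fin_two_of]

lemma sub_one_fin_two (a b c d : F) : !![a,b;c,d] - 1 = !![a-1,b;c,d-1] := by
  ext i j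
  fin_cases i <;> fin_cases j <;> simp [Matrix.one_apply]

lemma sum4_swap {M : Type} [AddCommMonoid M] (g : F → F → F → F → M) :
    (∑ a : F, ∑ b : F, ∑ c : F, ∑ d : F, g a b c d)
      = ∑ b : F, ∑ c : F, ∑ a : F, ∑ d : F, g a b c d := by
  rw [Finset.sum_comm]
  exact Finset.sum_congr rfl fun b _ => Finset.sum_comm

lemma msing' :
    (univ.filter fun X : M2 F => X.det = 0).card =
      ∑ b : F, ∑ c : F, ∑ a : F, ∑ d : F, if a * d = b * c then 1 else 0 := by
  rw [card_filter_eq_sum]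
  simp only [Matrix.det_fin_two_of, sub_eq_zero]
  exact sum4_swap (fun a b c d => if a * d = b * c then (1:ℕ) else 0)

lemma mone' :
    (univ.filter fun X : M2 F => X.det = 0 ∧ (X - 1).det = 0).card =
      ∑ a : F, ∑ d : F, ∑ b : F, ∑ c : F, if a * d = b * c ∧ a + d = 1 then 1 else 0 := by
  rw [card_filter_eq_sum]
  have : ∀ a b c d : F,
      ((!![a,b;c,d]).det = 0 ∧ ((!![a,b;c,d] : M2 F) - 1).det = 0)
        = (a * d = b * c ∧ a + d = 1) := by
    intro a b c d
    rw [sub_one_fin_two, Matrix.det_fin_two_of, Matrix.det_fin_two_of, eq_iff_iff]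
    constructor <;> rintro ⟨h1, h2⟩ <;> constructor
    · linear_combination h1
    · linear_combination h1 - h2
    · linear_combination h1
    · linear_combination h1 - h2
  simp only [this]
  refine Finset.sum_congr rfl fun a _ => ?_
  rw [show (∑ b : F, ∑ c : F, ∑ d : F, if a * d = b * c ∧ a + d = 1 then (1:ℕ) else 0)
      = ∑ b : F, ∑ d : F, ∑ c : F, if a * d = b * c ∧ a + d = 1 then (1:ℕ) else 0
    from Finset.sum_congr rfl fun b _ => Finset.sum_comm]
  exact Finset.sum_comm

lemma sub_E_fin_two (a b c d : F) :
    !![a,b;c,d] - !![1,0;0,0] = !![a-1,b;c,d] := by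
  ext i j
  fin_cases i <;> fin_cases j <;> simp

lemma mE' :
    (univ.filter fun X : M2 F => X.det = 0 ∧ (X - !![1,0;0,0]).det = 0).card =
      ∑ a : F, ∑ b : F, ∑ c : F, ∑ d : F, if d = 0 ∧ b * c = 0 then 1 else 0 := by
  rw [card_filter_eq_sum]
  refine Finset.sum_congr rfl fun a _ => Finset.sum_congr rfl fun b _ =>
    Finset.sum_congr rfl fun c _ => Finset.sum_congr rfl fun d _ => ?_
  have : ((!![a,b;c,d]).det = 0 ∧ ((!![a,b;c,d] : M2 F) - !![1,0;0,0]).det = 0)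
      = (d = 0 ∧ b * c = 0) := by
    rw [sub_E_fin_two, Matrix.det_fin_two_of, Matrix.det_fin_two_of, eq_iff_iff]
    constructor <;> rintro ⟨h1, h2⟩
    · have hd : d = 0 := by linear_combination h1 - h2
      exact ⟨hd, by linear_combination a * hd - h1⟩
    · subst h1
      constructor
      · linear_combination -h2
      · linear_combination -h2
  simp only [this]

lemma card_filter_equiv (e : M2 F ≃ M2 F) (p q : M2 F → Prop)
    [DecidablePred p] [DecidablePred q] (h : ∀ X, p X ↔ q (e X)) :
    (univ.filter p).card = (univ.filter q).card := by
  have : univ.filter p = (univ.filter q).map e.symm.toEmbedding := by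
    ext X
    rw [Finset.mem_map_equiv]
    simp [h]
  rw [this, Finset.card_map]

lemma det_unit_ne {u : (M2 F)ˣ} : (u : M2 F).det ≠ 0 := by
  intro h
  have := (Matrix.isUnit_iff_isUnit_det (u : M2 F)).mp u.isUnit
  rw [h] at this
  exact (not_isUnit_zero : ¬ IsUnit (0:F)) this

/-- translation -/
lemma card_shift (D : M2 F) :
    (univ.filter fun X : M2 F => (X - D).det = 0).card =
      (univ.filter fun X : M2 F => X.det = 0).card := by
  refine card_filter_equiv (Equiv.subRight D) _ _ fun X => ?_
  simp [Equiv.subRight]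

/-- two-sided multiplication -/
lemma card_sandwich (P Q : (M2 F)ˣ) (D : M2 F) (hD : D = (P : M2 F) * !![1,0;0,0] * (Q : M2 F)) :
    (univ.filter fun X : M2 F => X.det = 0 ∧ (X - D).det = 0).card =
      (univ.filter fun Y : M2 F => Y.det = 0 ∧ (Y - !![1,0;0,0]).det = 0).card := by
  refine card_filter_equiv ((Units.mulLeft P⁻¹).trans (Units.mulRight Q⁻¹)) _ _ fun X => ?_
  simp only [Equiv.trans_apply, Units.mulLeft_apply, Units.mulRight_apply]
  have hdet : ∀ Z : M2 F, ((↑P⁻¹ : M2 F) * Z * (↑Q⁻¹ : M2 F)).det = 0 ↔ Z.det = 0 := by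
    intro Z
    rw [Matrix.det_mul, Matrix.det_mul, mul_eq_zero, mul_eq_zero]
    simp [det_unit_ne]
  have hsub : (↑P⁻¹ : M2 F) * X * (↑Q⁻¹ : M2 F) - !![1,0;0,0]
      = (↑P⁻¹ : M2 F) * (X - D) * (↑Q⁻¹ : M2 F) := by
    rw [hD, mul_sub, sub_mul]
    congr 1
    symm
    have h1 : (↑P⁻¹ : M2 F) * ((P : M2 F) * !![1,0;0,0] * (Q : M2 F)) * (↑Q⁻¹ : M2 F)
        = ((↑P⁻¹ * ↑P : M2 F)) * (!![1,0;0,0] * ((↑Q * ↑Q⁻¹ : M2 F))) := by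
      simp only [mul_assoc]
    rw [h1, ← Units.val_mul, ← Units.val_mul, inv_mul_cancel, mul_inv_cancel,
      Units.val_one, one_mul, mul_one]
  rw [hsub, hdet X, hdet (X - D)]

lemma card_inv_case (u : (M2 F)ˣ) :
    (univ.filter fun X : M2 F => X.det = 0 ∧ (X - (u : M2 F)).det = 0).card =
      (univ.filter fun Y : M2 F => Y.det = 0 ∧ (Y - 1).det = 0).card := by
  refine card_filter_equiv (Units.mulLeft u⁻¹) _ _ fun X => ?_
  simp only [Units.mulLeft_apply]
  have hdet : ∀ Z : M2 F, ((↑u⁻¹ : M2 F) * Z).det = 0 ↔ Z.det = 0 := by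
    intro Z
    rw [Matrix.det_mul, mul_eq_zero]
    simp [det_unit_ne]
  have hsub : (↑u⁻¹ : M2 F) * X - 1 = (↑u⁻¹ : M2 F) * (X - (u : M2 F)) := by
    rw [mul_sub, ← Units.val_mul, inv_mul_cancel, Units.val_one]
  rw [hsub, hdet X, hdet (X - (u : M2 F))]

lemma rank1_decomp_aux (D : M2 F) (h00 : D 0 0 ≠ 0) (hdet : D.det = 0) :
    ∃ P Q : (M2 F)ˣ, D = (P : M2 F) * !![1,0;0,0] * (Q : M2 F) := by
  have hdet2 : D 0 0 * D 1 1 - D 0 1 * D 1 0 = 0 := by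
    rw [← Matrix.det_fin_two]; exact hdet
  set P : M2 F := !![D 0 0, 0; D 1 0, 1] with hPdef
  set Q : M2 F := !![1, (D 0 0)⁻¹ * D 0 1; 0, 1] with hQdef
  have hP : IsUnit P := by
    rw [Matrix.isUnit_iff_isUnit_det, hPdef, Matrix.det_fin_two_of, isUnit_iff_ne_zero]
    simpa using h00
  have hQ : IsUnit Q := by
    rw [Matrix.isUnit_iff_isUnit_det, hQdef, Matrix.det_fin_two_of, isUnit_iff_ne_zero]
    simp
  refine ⟨hP.unit, hQ.unit, ?_⟩
  rw [hP.unit_spec, hQ.unit_spec]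
  have key : P * !![1,0;0,0] * Q = !![D 0 0, D 0 1; D 1 0, D 1 1] := by
    ext i j
    fin_cases i <;> fin_cases j <;>
      simp [hPdef, hQdef, Matrix.mul_apply, Fin.sum_univ_two] <;>
      field_simp <;> linear_combination -hdet2
  rw [key, ← Matrix.eta_fin_two]

lemma rank1_decomp (D : M2 F) (hD0 : D ≠ 0) (hdet : D.det = 0) :
    ∃ P Q : (M2 F)ˣ, D = (P : M2 F) * !![1,0;0,0] * (Q : M2 F) := by
  set S : M2 F := !![0,1;1,0] with hSdef
  have hS : IsUnit S := by
    rw [Matrix.isUnit_iff_isUnit_det, hSdef, Matrix.det_fin_two_of, isUnit_iff_ne_zero]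
    simp
  have hSS : S * S = 1 := by
    ext i j
    fin_cases i <;> fin_cases j <;> simp [hSdef, Matrix.mul_apply, Fin.sum_univ_two,
      Matrix.one_apply]
  have hSu : (hS.unit : M2 F) = S := hS.unit_spec
  by_cases h00 : D 0 0 ≠ 0
  · exact rank1_decomp_aux D h00 hdet
  push_neg at h00
  by_cases h01 : D 0 1 ≠ 0
  · have h1 : (D * S) 0 0 ≠ 0 := by
      simpa [Matrix.mul_apply, Fin.sum_univ_two, hSdef] using h01
    have h2 : (D * S).det = 0 := by rw [Matrix.det_mul, hdet, zero_mul]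
    obtain ⟨P, Q, hPQ⟩ := rank1_decomp_aux (D * S) h1 h2
    refine ⟨P, Q * hS.unit, ?_⟩
    have : D = D * S * S := by rw [mul_assoc, hSS, mul_one]
    rw [this, hPQ, Units.val_mul, hSu, mul_assoc, mul_assoc]
  push_neg at h01
  by_cases h10 : D 1 0 ≠ 0
  · have h1 : (S * D) 0 0 ≠ 0 := by
      simpa [Matrix.mul_apply, Fin.sum_univ_two, hSdef] using h10
    have h2 : (S * D).det = 0 := by rw [Matrix.det_mul, hdet, mul_zero]
    obtain ⟨P, Q, hPQ⟩ := rank1_decomp_aux (S * D) h1 h2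
    refine ⟨hS.unit * P, Q, ?_⟩
    have : D = S * (S * D) := by rw [← mul_assoc, hSS, one_mul]
    rw [this, hPQ, Units.val_mul, hSu, ← mul_assoc, ← mul_assoc]
  push_neg at h10
  by_cases h11 : D 1 1 ≠ 0
  · have h1 : (S * D * S) 0 0 ≠ 0 := by
      have he : (S * D * S) 0 0 = D 1 1 := by
        simp [Matrix.mul_apply, Fin.sum_univ_two, hSdef, Matrix.vecMul, dotProduct, Matrix.vecHead, Matrix.vecTail]
      rw [he]; exact h11
    have h2 : (S * D * S).det = 0 := by
      rw [Matrix.det_mul, Matrix.det_mul, hdet, mul_zero, zero_mul]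
    obtain ⟨P, Q, hPQ⟩ := rank1_decomp_aux (S * D * S) h1 h2
    refine ⟨hS.unit * P, Q * hS.unit, ?_⟩
    have key2 : S * (S * D * S) * S = D := by
      simp only [← mul_assoc]
      rw [hSS, one_mul, mul_assoc, hSS, mul_one]
    rw [Units.val_mul, Units.val_mul, hSu, ← key2, hPQ]
    simp only [mul_assoc]
  push_neg at h11
  exfalso
  apply hD0
  ext i j
  fin_cases i <;> fin_cases j <;> simpa using by assumption

lemma msing :
    (univ.filter fun X : M2 F => X.det = 0).card =
      Fintype.card F ^ 3 + Fintype.card F ^ 2 - Fintype.card F := by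
  rw [msing', count_sing]

lemma mone :
    (univ.filter fun X : M2 F => X.det = 0 ∧ (X - 1).det = 0).card =
      Fintype.card F ^ 2 + Fintype.card F := by
  rw [mone', count_trace]

lemma mE :
    (univ.filter fun X : M2 F => X.det = 0 ∧ (X - !![1,0;0,0]).det = 0).card =
      2 * Fintype.card F ^ 2 - Fintype.card F := by
  rw [mE', count_E]

lemma common_count (D : M2 F) :
    (univ.filter fun X : M2 F => X.det ≠ 0 ∧ (X - D).det ≠ 0).card
      + ((univ.filter fun X : M2 F => X.det = 0).card
        + (univ.filter fun X : M2 F => (X - D).det = 0).card)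
    = Fintype.card F ^ 4
      + (univ.filter fun X : M2 F => X.det = 0 ∧ (X - D).det = 0).card := by
  classical
  set s := univ.filter fun X : M2 F => X.det = 0 with hs
  set t := univ.filter fun X : M2 F => (X - D).det = 0 with ht
  have h1 : (univ.filter fun X : M2 F => X.det ≠ 0 ∧ (X - D).det ≠ 0) = univ \ (s ∪ t) := by
    ext X
    simp [hs, ht, not_or, and_comm]
  have h2 : (univ.filter fun X : M2 F => X.det = 0 ∧ (X - D).det = 0) = s ∩ t := by
    ext X
    simp [hs, ht]
  rw [h1, h2, Finset.card_sdiff_of_subset (Finset.subset_univ _)]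
  have h3 : (s ∪ t).card + (s ∩ t).card = s.card + t.card :=
    Finset.card_union_add_card_inter s t
  have h4 : (s ∪ t).card ≤ Finset.univ.card := Finset.card_le_card (Finset.subset_univ _)
  have h5 : (Finset.univ : Finset (M2 F)).card = Fintype.card F ^ 4 := by
    rw [Finset.card_univ, card_M2]
  omega

lemma isUnit_iff_det_ne (X : M2 F) : IsUnit X ↔ X.det ≠ 0 := by
  rw [Matrix.isUnit_iff_isUnit_det, isUnit_iff_ne_zero]

lemma ne_zero_of_det_ne {X : M2 F} (h : X.det ≠ 0) : X ≠ 0 := by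
  intro h0
  rw [h0, Matrix.det_zero] at h
  exact h rfl

def commonEquiv (v w : M2 F) :
    ((unitGraph 2 F).commonNeighbors v w) ≃
      {X : M2 F // X.det ≠ 0 ∧ (X - (w - v)).det ≠ 0} where
  toFun C := ⟨(C : M2 F) - v, by
    obtain ⟨h1, h2⟩ := (SimpleGraph.mem_commonNeighbors _).mp C.2
    refine ⟨(isUnit_iff_det_ne _).mp h1.2, ?_⟩
    rw [sub_sub_sub_cancel_right]
    exact (isUnit_iff_det_ne _).mp h2.2⟩
  invFun X := ⟨v + (X : M2 F), by
    obtain ⟨h1, h2⟩ := X.2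
    rw [SimpleGraph.mem_commonNeighbors]
    have e1 : v + (X : M2 F) - v = (X : M2 F) := by abel
    have e2 : v + (X : M2 F) - w = (X : M2 F) - (w - v) := by abel
    refine ⟨⟨?_, ?_⟩, ?_, ?_⟩
    · intro h
      exact ne_zero_of_det_ne h1 (by rw [← e1, ← h, sub_self])
    · rw [e1]
      exact (isUnit_iff_det_ne _).mpr h1
    · intro h
      exact ne_zero_of_det_ne h2 (by rw [← e2, ← h, sub_self])
    · rw [e2]
      exact (isUnit_iff_det_ne _).mpr h2⟩
  left_inv C := by
    ext
    simp
  right_inv X := by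
    ext
    simp

lemma common_card (v w : M2 F) :
    Fintype.card ((unitGraph 2 F).commonNeighbors v w) =
      (univ.filter fun X : M2 F => X.det ≠ 0 ∧ (X - (w - v)).det ≠ 0).card := by
  rw [Fintype.card_congr (commonEquiv v w), Fintype.card_subtype]

def nbhdEquiv (v : M2 F) :
    ((unitGraph 2 F).neighborSet v) ≃ {X : M2 F // X.det ≠ 0} where
  toFun C := ⟨(C : M2 F) - v, (isUnit_iff_det_ne _).mp C.2.2⟩
  invFun X := ⟨v + (X : M2 F), by
    have e1 : v + (X : M2 F) - v = (X : M2 F) := by abel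
    constructor
    · intro h
      exact ne_zero_of_det_ne X.2 (by rw [← e1, ← h, sub_self])
    · rw [e1]
      exact (isUnit_iff_det_ne _).mpr X.2⟩
  left_inv C := by
    ext
    simp
  right_inv X := by
    ext
    simp

lemma degree_card (v : M2 F) :
    (unitGraph 2 F).degree v = (univ.filter fun X : M2 F => X.det ≠ 0).card := by
  rw [← SimpleGraph.card_neighborSet_eq_degree,
    Fintype.card_congr (nbhdEquiv v), Fintype.card_subtype]

lemma pow_facts :
    2 * Fintype.card F ≤ Fintype.card F ^ 2 ∧
    2 * Fintype.card F ^ 2 ≤ Fintype.card F ^ 3 ∧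
    2 * Fintype.card F ^ 3 ≤ Fintype.card F ^ 4 := by
  have hq : 2 ≤ Fintype.card F := Fintype.one_lt_card
  refine ⟨?_, ?_, ?_⟩
  · calc 2 * Fintype.card F ≤ Fintype.card F * Fintype.card F :=
        Nat.mul_le_mul_right _ hq
      _ = Fintype.card F ^ 2 := by ring
  · calc 2 * Fintype.card F ^ 2 ≤ Fintype.card F * Fintype.card F ^ 2 :=
        Nat.mul_le_mul_right _ hq
      _ = Fintype.card F ^ 3 := by ring
  · calc 2 * Fintype.card F ^ 3 ≤ Fintype.card F * Fintype.card F ^ 3 :=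
        Nat.mul_le_mul_right _ hq
      _ = Fintype.card F ^ 4 := by ring

lemma filter_det_ne :
    (univ.filter fun X : M2 F => X.det ≠ 0).card =
      Fintype.card F ^ 4 - Fintype.card F ^ 3 - Fintype.card F ^ 2 + Fintype.card F := by
  have h1 := Finset.card_filter_add_card_filter_not
    (s := (univ : Finset (M2 F))) (p := fun X => X.det = 0)
  rw [msing, Finset.card_univ, card_M2] at h1
  have h2 : (univ.filter fun X : M2 F => ¬ X.det = 0).card =
      (univ.filter fun X : M2 F => X.det ≠ 0).card := rfl
  obtain ⟨ha, hb, hc⟩ := pow_facts (F := F)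
  omega

theorem stmt_12 (F : Type) [Field F] [Fintype F] [DecidableEq F] :
    (unitGraph 2 F).IsSRGWith
      (Fintype.card F ^ 4)
      (Fintype.card F ^ 4 - Fintype.card F ^ 3 - Fintype.card F ^ 2 + Fintype.card F)
      (Fintype.card F ^ 4 + 3 * Fintype.card F - 2 * Fintype.card F ^ 3 - Fintype.card F ^ 2)
      (Fintype.card F ^ 4 - 2 * Fintype.card F ^ 3 + Fintype.card F) := by
  obtain ⟨ha, hb, hc⟩ := pow_facts (F := F)
  have hq : 2 ≤ Fintype.card F := Fintype.one_lt_card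
  constructor
  · exact card_M2
  · intro v
    rw [degree_card v, filter_det_ne]
  · intro v w hadj
    obtain ⟨hne, hU⟩ := hadj
    rw [common_card v w]
    have hcc := common_count (F := F) (w - v)
    rw [msing, card_shift, msing] at hcc
    have hboth : (univ.filter fun X : M2 F => X.det = 0 ∧ (X - (w - v)).det = 0).card
        = Fintype.card F ^ 2 + Fintype.card F := by
      rw [show (w - v) = (hU.unit : M2 F) from (hU.unit_spec).symm, card_inv_case, mone]
    rw [hboth] at hcc
    omega
  · intro v w hne hnadj
    rw [common_card v w]
    have hD0 : w - v ≠ 0 := sub_ne_zero.mpr (Ne.symm hne)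
    have hDdet : (w - v).det = 0 := by
      by_contra h
      exact hnadj ⟨hne, (isUnit_iff_det_ne _).mpr h⟩
    obtain ⟨P, Q, hPQ⟩ := rank1_decomp (w - v) hD0 hDdet
    have hcc := common_count (F := F) (w - v)
    rw [msing, card_shift, msing] at hcc
    have hboth : (univ.filter fun X : M2 F => X.det = 0 ∧ (X - (w - v)).det = 0).card
        = 2 * Fintype.card F ^ 2 - Fintype.card F := by
      rw [card_sandwich P Q (w - v) hPQ, mE]
    rw [hboth] at hcc
    omega
end

section
/- Let q be a prime power. The characteristic polynomial over ℂ of the adjacency matrix of the unit-graph on Mat_2(F_q) equals (X − (q⁴ − q³ − q² + q)) · (X − q)^{q⁴ − q³ − q² + q} · (X − (q − q²))^{q³ + q² − q − 1}; equivalently, the spectrum of this graph consists of the eigenvalue q⁴ − q³ − q² + q with multiplicity 1, the eigenvalue q with multiplicity q⁴ − q³ − q² + q, and the eigenvalue q − q² with multiplicity q³ + q² − q − 1. -/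
set_option linter.unusedSectionVars false

open scoped Classical
open Polynomial

namespace UnitGraphAux

noncomputable section

variable (F : Type) [Field F] [Fintype F] [DecidableEq F]

abbrev GG := Matrix (Fin 2) (Fin 2) F

/-- A fixed nontrivial additive character of `F` with values in `ℂ`. -/
def ψ : AddChar F ℂ := AddChar.FiniteField.primitiveChar_to_Complex F

lemma ψ_ne : ψ F ≠ (0 : AddChar F ℂ) := by
  have h := AddChar.FiniteField.primitiveChar_to_Complex_isPrimitive F
  have h1 := h (one_ne_zero (α := F))
  rw [AddChar.mulShift_one] at h1
  rw [← AddChar.one_eq_zero]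
  exact h1

lemma sum_ψ : ∑ x : F, ψ F x = 0 :=
  AddChar.sum_eq_zero_iff_ne_zero.2 (ψ_ne F)

/-- The additive character of the matrix ring attached to `M`. -/
def χ (M : GG F) : AddChar (GG F) ℂ :=
  (ψ F).compAddMonoidHom
    { toFun := fun A => (M * A).trace
      map_zero' := by simp
      map_add' := by intro A B; show (_ * (A + B)).trace = _; rw [Matrix.mul_add, Matrix.trace_add] }

lemma χ_apply (M A : GG F) : χ F M A = ψ F ((M * A).trace) := rfl

lemma card_GG : Fintype.card (GG F) = Fintype.card F ^ 4 := by
  have : Fintype.card (GG F) = Fintype.card (Fin 2 → Fin 2 → F) := rfl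
  rw [this]
  simp [Fintype.card_fun]
  ring

lemma χ_ne (M : GG F) (hM : M ≠ 0) : χ F M ≠ (0 : AddChar (GG F) ℂ) := by
  
  have hne : ψ F ≠ 1 := by rw [AddChar.one_eq_zero]; exact ψ_ne F
  obtain ⟨x, hx⟩ := AddChar.ne_one_iff.1 hne
  have hM2 : ∃ i j, M i j ≠ 0 := by
    by_contra h; push_neg at h; exact hM (by ext i j; simpa using h i j)
  obtain ⟨i, j, hij⟩ := hM2
  rw [← AddChar.one_eq_zero, AddChar.ne_one_iff]
  refine ⟨Matrix.single j i ((M i j)⁻¹ * x), ?_⟩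
  rw [χ_apply]
  have ht : (M * Matrix.single j i ((M i j)⁻¹ * x)).trace = x := by
    simp only [Matrix.trace, Matrix.diag, Matrix.mul_apply, Matrix.single,
      Matrix.of_apply, ite_and, Finset.sum_ite_eq, Finset.sum_ite_eq', mul_ite, mul_zero]
    simp [← mul_assoc, mul_inv_cancel₀ hij]
  rw [ht]; exact hx

lemma sum_χ (M : GG F) :
    ∑ A : GG F, χ F M A = if M = 0 then ((Fintype.card F : ℂ) ^ 4) else 0 := by
  
  split_ifs with h
  · subst h
    have : ∀ A : GG F, χ F 0 A = 1 := by intro A; rw [χ_apply]; simp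
    simp only [this, Finset.sum_const, Finset.card_univ, nsmul_eq_mul, mul_one]
    rw [card_GG]; push_cast; ring
  · exact AddChar.sum_eq_zero_iff_ne_zero.2 (χ_ne F M h)

/-- The eigenvalue attached to `M`. -/
def lam (M : GG F) : ℂ := ∑ U : GG F, if IsUnit U then χ F M U else 0

def P : Matrix (GG F) (GG F) ℂ := fun A M => χ F M A

def Q : Matrix (GG F) (GG F) ℂ := fun M A => χ F M (-A)

lemma QP : Q F * P F = ((Fintype.card F : ℂ) ^ 4) • (1 : Matrix (GG F) (GG F) ℂ) := by
  
  ext M N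
  simp only [Matrix.mul_apply, Q, P, Matrix.smul_apply, Matrix.one_apply, smul_eq_mul]
  have key : ∀ A : GG F, χ F M (-A) * χ F N A = χ F (N - M) A := by
    intro A
    rw [χ_apply, χ_apply, χ_apply, ← AddChar.map_add_eq_mul]
    congr 1
    rw [Matrix.sub_mul, Matrix.trace_sub, Matrix.mul_neg, Matrix.trace_neg]
    ring
  simp only [key]
  rw [sum_χ]
  by_cases h : M = N
  · simp [h]
  · rw [if_neg (fun hc => h (sub_eq_zero.mp hc).symm), if_neg h, mul_zero]

lemma P_isUnit : IsUnit (P F).det := by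
  have hd := congrArg Matrix.det (QP F)
  rw [Matrix.det_mul, Matrix.det_smul, Matrix.det_one, mul_one] at hd
  rw [isUnit_iff_ne_zero]
  intro h0
  rw [h0, mul_zero] at hd
  have hne : (((Fintype.card F : ℂ)) ^ 4) ^ (Fintype.card (GG F)) ≠ 0 := by
    apply pow_ne_zero; apply pow_ne_zero
    exact_mod_cast (Fintype.card_ne_zero (α := F))
  exact hne hd.symm

lemma AP : (unitGraph 2 F).adjMatrix ℂ * P F = P F * Matrix.diagonal (lam F) := by
  ext A M
  rw [Matrix.mul_diagonal]
  rw [SimpleGraph.adjMatrix_mul_apply, SimpleGraph.neighborFinset_eq_filter, Finset.sum_filter]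
  have hAdj : ∀ B : GG F, (unitGraph 2 F).Adj A B ↔ IsUnit (B - A) := by
    intro B
    constructor
    · exact fun h => h.2
    · intro h
      refine ⟨fun hc => ?_, h⟩
      rw [hc, sub_self] at h
      exact not_isUnit_zero h
  have h1 : ∀ B : GG F, (if (unitGraph 2 F).Adj A B then P F B M else 0)
      = (if IsUnit (B - A) then χ F M B else 0) := by
    intro B
    by_cases h : (unitGraph 2 F).Adj A B
    · rw [if_pos h, if_pos ((hAdj B).1 h)]; rfl
    · rw [if_neg h, if_neg (fun hc => h ((hAdj B).2 hc))]
  rw [Finset.sum_congr rfl (fun B _ => h1 B)]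
  rw [← Equiv.sum_comp (Equiv.addLeft A) (fun B => if IsUnit (B - A) then χ F M B else 0)]
  simp only [Equiv.coe_addLeft, add_sub_cancel_left]
  have h2 : ∀ U : GG F, (if IsUnit U then χ F M (A + U) else 0)
      = χ F M A * (if IsUnit U then χ F M U else 0) := by
    intro U
    rw [AddChar.map_add_eq_mul]
    split_ifs <;> simp
  rw [Finset.sum_congr rfl (fun U _ => h2 U), ← Finset.mul_sum]
  rfl

lemma charpoly_conj {n R : Type*} [Fintype n] [DecidableEq n] [CommRing R]
    (Pm N : Matrix n n R) (h : IsUnit Pm.det) :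
    (Pm * N * Pm⁻¹).charpoly = N.charpoly := by
  have hinv : Pm * Pm⁻¹ = 1 := Matrix.mul_nonsing_inv _ h
  have hmap : (Pm.map (C : R →+* R[X])) * ((Pm⁻¹).map (C : R →+* R[X])) = 1 := by
    rw [← Matrix.map_mul, hinv, Matrix.map_one _ (map_zero _) (map_one _)]
  have hc : Matrix.charmatrix (Pm * N * Pm⁻¹)
      = Pm.map (C : R →+* R[X]) * Matrix.charmatrix N * (Pm⁻¹).map (C : R →+* R[X]) := by
    rw [Matrix.charmatrix, Matrix.charmatrix, Matrix.mul_sub, Matrix.sub_mul]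
    congr 1
    · rw [← (Matrix.scalar_commute (X : R[X]) (fun r => Commute.all _ _)
          (Pm.map (C : R →+* R[X]))).eq, Matrix.mul_assoc, hmap, Matrix.mul_one]
    · simp only [RingHom.mapMatrix_apply, Matrix.map_mul]
  rw [Matrix.charpoly, Matrix.charpoly, hc, Matrix.det_mul, Matrix.det_mul]
  have hdet : Pm.det * (Pm⁻¹).det = 1 := by rw [← Matrix.det_mul, hinv, Matrix.det_one]
  have hd2 : (Pm.map (C : R →+* R[X])).det * ((Pm⁻¹).map (C : R →+* R[X])).det = 1 := by
    rw [← Matrix.det_mul, hmap, Matrix.det_one]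
  calc (Pm.map (C : R →+* R[X])).det * (Matrix.charmatrix N).det
        * ((Pm⁻¹).map (C : R →+* R[X])).det
      = (Matrix.charmatrix N).det * ((Pm.map (C : R →+* R[X])).det
        * ((Pm⁻¹).map (C : R →+* R[X])).det) := by ring
    _ = (Matrix.charmatrix N).det := by rw [hd2, mul_one]

lemma charpoly_diagonal {n R : Type*} [Fintype n] [DecidableEq n] [CommRing R]
    (d : n → R) : (Matrix.diagonal d).charpoly = ∏ i : n, (X - C (d i)) := by
  have hmat : Matrix.charmatrix (Matrix.diagonal d) = Matrix.diagonal (fun i => X - C (d i)) := by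
    ext i j
    by_cases h : i = j
    · subst h
      rw [Matrix.charmatrix_apply_eq, Matrix.diagonal_apply_eq, Matrix.diagonal_apply_eq]
    · rw [Matrix.charmatrix_apply_ne _ _ _ h, Matrix.diagonal_apply_ne _ h,
        Matrix.diagonal_apply_ne _ h, map_zero, neg_zero]
  rw [Matrix.charpoly, hmat, Matrix.det_diagonal]

lemma charpoly_eq :
    ((unitGraph 2 F).adjMatrix ℂ).charpoly = ∏ M : GG F, (X - C (lam F M)) := by
  have hP := P_isUnit F
  have h1 : (unitGraph 2 F).adjMatrix ℂ = P F * Matrix.diagonal (lam F) * (P F)⁻¹ := by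
    calc (unitGraph 2 F).adjMatrix ℂ
        = (unitGraph 2 F).adjMatrix ℂ * (P F * (P F)⁻¹) := by
          rw [Matrix.mul_nonsing_inv _ hP, Matrix.mul_one]
      _ = ((unitGraph 2 F).adjMatrix ℂ * P F) * (P F)⁻¹ := by rw [Matrix.mul_assoc]
      _ = P F * Matrix.diagonal (lam F) * (P F)⁻¹ := by rw [AP F]
  rw [h1, charpoly_conj _ _ hP, charpoly_diagonal]

/-! ### Values of `lam` -/

lemma reindex_unit_sum (A B : GG F) (hA : IsUnit A) (hB : IsUnit B) (f : GG F → ℂ) :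
    ∑ U : GG F, (if IsUnit U then f (A * U * B) else 0)
      = ∑ V : GG F, (if IsUnit V then f V else 0) := by
  obtain ⟨a, ha⟩ := hA
  obtain ⟨b, hb⟩ := hB
  subst ha hb
  rw [← Equiv.sum_comp ((Units.mulLeft a).trans (Units.mulRight b))
    (fun V => if IsUnit V then f V else 0)]
  apply Finset.sum_congr rfl
  intro U _
  have : ((Units.mulLeft a).trans (Units.mulRight b)) U = ↑a * U * ↑b := rfl
  rw [this]
  by_cases h : IsUnit U
  · rw [if_pos h, if_pos ((a.isUnit.mul h).mul b.isUnit)]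
  · rw [if_neg h, if_neg (fun hc => h ?_)]
    have h2 := (a⁻¹.isUnit.mul hc).mul b⁻¹.isUnit
    have : ↑a⁻¹ * (↑a * U * ↑b) * ↑b⁻¹ = U := by
      rw [← mul_assoc, ← mul_assoc, Units.inv_mul, one_mul, mul_assoc, Units.mul_inv, mul_one]
    rwa [this] at h2

lemma lam_unit (M : GG F) (h : IsUnit M) : lam F M = lam F 1 := by
  obtain ⟨u, hu⟩ := h
  unfold lam
  have key : ∀ U : GG F, (if IsUnit U then χ F M U else 0)
      = (if IsUnit U then (fun V => χ F 1 V) (M * U * 1) else 0) := by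
    intro U
    by_cases h : IsUnit U
    · rw [if_pos h, if_pos h]
      show χ F M U = χ F 1 (M * U * 1)
      rw [χ_apply, χ_apply, mul_one, Matrix.one_mul]
    · rw [if_neg h, if_neg h]
  rw [Finset.sum_congr rfl (fun U _ => key U)]
  rw [reindex_unit_sum F M 1 ⟨u, hu⟩ isUnit_one]

lemma sum_lam : ∑ M : GG F, lam F M = 0 := by
  unfold lam
  rw [Finset.sum_comm]
  have key : ∀ U : GG F, (∑ M : GG F, if IsUnit U then χ F M U else 0) = 0 := by
    intro U
    by_cases h : IsUnit U
    · simp only [if_pos h]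
      have hswap : ∀ M : GG F, χ F M U = χ F U M := by
        intro M; rw [χ_apply, χ_apply, Matrix.trace_mul_comm]
      rw [Finset.sum_congr rfl (fun M _ => hswap M), sum_χ]
      rw [if_neg]
      intro hc
      rw [hc] at h
      exact not_isUnit_zero h
    · simp [if_neg h]
  exact Finset.sum_eq_zero (fun U _ => key U)

/-- completion of a nonzero vector to an invertible matrix (as column 0) -/
def comp (v : Fin 2 → F) : GG F :=
  !![v 0, if v 0 = 0 then 1 else 0; v 1, if v 0 = 0 then 0 else 1]

lemma comp_isUnit (v : Fin 2 → F) (hv : v ≠ 0) : IsUnit (comp F v) := by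
  have hd : (comp F v).det = if v 0 = 0 then -(v 1) else v 0 := by
    unfold comp
    rw [Matrix.det_fin_two_of]
    split_ifs with h <;> simp [h]
  rw [Matrix.isUnit_iff_isUnit_det, hd]
  split_ifs with h
  · rw [isUnit_iff_ne_zero]
    intro hc
    apply hv
    funext i
    fin_cases i
    · exact h
    · simpa using neg_eq_zero.1 hc
  · exact isUnit_iff_ne_zero.2 h

lemma rank1_decomp (M : GG F) (h0 : M ≠ 0) (h1 : ¬IsUnit M) :
    ∃ x y : Fin 2 → F, x ≠ 0 ∧ y ≠ 0 ∧ M = Matrix.vecMulVec x y := by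
  have hdet : M 0 0 * M 1 1 - M 0 1 * M 1 0 = 0 := by
    rw [← Matrix.det_fin_two]
    by_contra hd
    exact h1 ((Matrix.isUnit_iff_isUnit_det M).2 (isUnit_iff_ne_zero.2 hd))
  by_cases hc0 : M 0 0 = 0 ∧ M 1 0 = 0
  · refine ⟨![M 0 1, M 1 1], ![0, 1], ?_, ?_, ?_⟩
    · intro hx
      apply h0
      have h01 : M 0 1 = 0 := by simpa using congrFun hx 0
      have h11 : M 1 1 = 0 := by simpa using congrFun hx 1
      ext i j
      fin_cases i <;> fin_cases j <;> simp [hc0.1, hc0.2, h01, h11]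
    · intro hy
      simpa using congrFun hy 1
    · ext i j
      fin_cases i <;> fin_cases j <;>
        simp [Matrix.vecMulVec_apply, hc0.1, hc0.2]
  · rw [not_and_or] at hc0
    refine ⟨![M 0 0, M 1 0], ![1, if M 0 0 = 0 then M 1 1 / M 1 0 else M 0 1 / M 0 0],
      ?_, ?_, ?_⟩
    · intro hx
      have h00 : M 0 0 = 0 := by simpa using congrFun hx 0
      have h10 : M 1 0 = 0 := by simpa using congrFun hx 1
      rcases hc0 with h | h
      · exact h h00
      · exact h h10
    · intro hy
      simpa using congrFun hy 0
    · have key0 : M 0 0 = 0 → M 1 0 ≠ 0 := by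
        intro h hc
        rcases hc0 with h' | h'
        · exact h' h
        · exact h' hc
      ext i j
      fin_cases i <;> fin_cases j <;> simp [Matrix.vecMulVec_apply]
      · split_ifs with h
        · have h10 := key0 h
          have h01 : M 0 1 = 0 := by
            have := hdet
            rw [h, zero_mul, zero_sub, neg_eq_zero] at this
            exact (mul_eq_zero.1 this).resolve_right h10
          rw [h, h01, zero_mul]
        · field_simp
      · split_ifs with h
        · have h10 := key0 h
          field_simp
        · field_simp
          linear_combination hdet

lemma trace_eq (x y : Fin 2 → F) (U : GG F) :
    (Matrix.vecMulVec x y * U).trace = ((comp F y).transpose * U * comp F x) 0 0 := by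
  simp only [Matrix.trace_fin_two, Matrix.mul_apply, Matrix.vecMulVec_apply,
    Fin.sum_univ_two, Matrix.transpose_apply, comp, Matrix.of_apply,
    Matrix.cons_val', Matrix.cons_val_zero, Matrix.cons_val_one, Matrix.head_cons,
    Matrix.empty_val', Matrix.cons_val_fin_one, Matrix.head_fin_const]
  ring

def quadEquiv : (F × F × F × F) ≃ GG F where
  toFun p := !![p.1, p.2.1; p.2.2.1, p.2.2.2]
  invFun M := (M 0 0, M 0 1, M 1 0, M 1 1)
  left_inv p := by simp
  right_inv M := (Matrix.eta_fin_two M).symm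

lemma quadEquiv_apply (p : F × F × F × F) :
    quadEquiv F p = !![p.1, p.2.1; p.2.2.1, p.2.2.2] := rfl

lemma sum_ite_eq_ne (y : F) (t : ℂ) :
    ∑ d : F, (if d = y then 0 else t) = ((Fintype.card F : ℂ) - 1) * t := by
  have h : ∀ d : F, (if d = y then (0:ℂ) else t) = t - (if d = y then t else 0) := by
    intro d; split_ifs <;> ring
  rw [Finset.sum_congr rfl fun d _ => h d, Finset.sum_sub_distrib, Finset.sum_const,
    Finset.card_univ, Finset.sum_ite_eq' Finset.univ y fun _ => t, if_pos (Finset.mem_univ y),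
    nsmul_eq_mul]
  ring

lemma c1 : ∑ V : GG F, (if IsUnit V then ψ F (V 0 0) else 0)
    = (Fintype.card F : ℂ) - (Fintype.card F : ℂ) ^ 2 := by
  set q : ℂ := (Fintype.card F : ℂ) with hq
  set e : (F × F × F × F) ≃ GG F := quadEquiv F with he
  rw [← Equiv.sum_comp e (fun V => if IsUnit V then ψ F (V 0 0) else 0)]
  have hcond : ∀ p : F × F × F × F,
      ((fun V => if IsUnit V then ψ F (V 0 0) else 0) (e p))
        = (if p.1 * p.2.2.2 - p.2.1 * p.2.2.1 = 0 then 0 else ψ F p.1) := by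
    intro p
    have h1 : IsUnit (e p) ↔ ¬(p.1 * p.2.2.2 - p.2.1 * p.2.2.1 = 0) := by
      rw [Matrix.isUnit_iff_isUnit_det, isUnit_iff_ne_zero]
      rw [he, quadEquiv_apply, Matrix.det_fin_two_of]
    have h2 : (e p) 0 0 = p.1 := by rw [he, quadEquiv_apply]; simp
    show (if IsUnit (e p) then ψ F ((e p) 0 0) else 0) = _
    rw [h2]
    by_cases h : p.1 * p.2.2.2 - p.2.1 * p.2.2.1 = 0
    · rw [if_neg (fun hu => (h1.1 hu) h), if_pos h]
    · rw [if_pos (h1.2 h), if_neg h]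
  rw [Finset.sum_congr rfl fun p _ => hcond p]
  simp only [Fintype.sum_prod_type]
  have inner : ∀ a : F, (∑ b : F, ∑ c : F, ∑ d : F,
      if a * d - b * c = 0 then (0:ℂ) else ψ F a)
      = (if a = 0 then (q - 1)^2 * q else (q - 1) * q^2 * ψ F a) := by
    intro a
    by_cases ha : a = 0
    · subst ha
      rw [if_pos rfl]
      have hd : ∀ b c : F, (∑ _d : F, if (0:F) * _d - b * c = 0 then (0:ℂ) else ψ F 0)
          = (if b * c = 0 then 0 else q) := by
        intro b c
        by_cases h : b * c = 0
        · simp [h]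
        · simp only [zero_mul, zero_sub, neg_eq_zero, if_neg h]
          rw [AddChar.map_zero_eq_one, Finset.sum_const, Finset.card_univ, nsmul_eq_mul, mul_one]
      rw [Finset.sum_congr rfl fun b _ => Finset.sum_congr rfl fun c _ => hd b c]
      have hc : ∀ b : F, (∑ c : F, if b * c = 0 then (0:ℂ) else q)
          = (if b = 0 then 0 else (q-1)*q) := by
        intro b
        by_cases hb : b = 0
        · simp [hb]
        · rw [if_neg hb]
          have h3 : ∀ c : F, (if b * c = 0 then (0:ℂ) else q) = (if c = 0 then 0 else q) := by
            intro c
            by_cases hcc : c = 0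
            · simp [hcc]
            · rw [if_neg (mul_ne_zero hb hcc), if_neg hcc]
          rw [Finset.sum_congr rfl fun c _ => h3 c, sum_ite_eq_ne]
      rw [Finset.sum_congr rfl fun b _ => hc b, sum_ite_eq_ne]
      ring
    · rw [if_neg ha]
      have hd : ∀ b c : F, (∑ d : F, if a * d - b * c = 0 then (0:ℂ) else ψ F a)
          = (q - 1) * ψ F a := by
        intro b c
        have h4 : ∀ d : F, (if a * d - b * c = 0 then (0:ℂ) else ψ F a)
            = (if d = b * c / a then 0 else ψ F a) := by
          intro d
          have h5 : a * d - b * c = 0 ↔ d = b * c / a := by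
            rw [sub_eq_zero, eq_div_iff ha, mul_comm]
          rw [if_congr h5 rfl rfl]
        rw [Finset.sum_congr rfl fun d _ => h4 d, sum_ite_eq_ne]
      rw [Finset.sum_congr rfl fun b _ => (Finset.sum_congr rfl fun c _ => hd b c)]
      rw [Finset.sum_const, Finset.sum_const, Finset.card_univ]
      simp only [nsmul_eq_mul]
      ring
  rw [Finset.sum_congr rfl fun a _ => inner a]
  have split : ∀ a : F, (if a = 0 then (q-1)^2*q else (q-1)*q^2 * ψ F a)
      = (if a = 0 then (q-1)^2*q - (q-1)*q^2 * ψ F a else 0) + (q-1)*q^2 * ψ F a := by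
    intro a; split_ifs <;> ring
  rw [Finset.sum_congr rfl fun a _ => split a, Finset.sum_add_distrib,
    Finset.sum_ite_eq' Finset.univ (0:F) _, if_pos (Finset.mem_univ _), ← Finset.mul_sum, sum_ψ,
    mul_zero, add_zero, AddChar.map_zero_eq_one]
  ring

lemma lam_rank1 (M : GG F) (h0 : M ≠ 0) (h1 : ¬IsUnit M) :
    lam F M = (Fintype.card F : ℂ) - (Fintype.card F : ℂ) ^ 2 := by
  obtain ⟨x, y, hx, hy, rfl⟩ := rank1_decomp F M h0 h1
  unfold lam
  have hAt : IsUnit ((comp F y).transpose) := by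
    rw [Matrix.isUnit_iff_isUnit_det, Matrix.det_transpose, ← Matrix.isUnit_iff_isUnit_det]
    exact comp_isUnit F y hy
  have key : ∀ U : GG F, (if IsUnit U then χ F (Matrix.vecMulVec x y) U else 0)
      = (if IsUnit U then (fun V => ψ F (V 0 0)) ((comp F y).transpose * U * comp F x) else 0) := by
    intro U
    by_cases h : IsUnit U
    · rw [if_pos h, if_pos h]
      show χ F (Matrix.vecMulVec x y) U = ψ F (((comp F y).transpose * U * comp F x) 0 0)
      rw [χ_apply, trace_eq]
    · rw [if_neg h, if_neg h]
  rw [Finset.sum_congr rfl fun U _ => key U]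
  rw [reindex_unit_sum F _ _ hAt (comp_isUnit F x hx) (fun V => ψ F (V 0 0))]
  exact c1 F

/-! ### Counting -/

lemma two_le_q : 2 ≤ Fintype.card F := Fintype.one_lt_card

lemma pow_ineq1 : Fintype.card F ^ 3 ≤ Fintype.card F ^ 4 :=
  Nat.pow_le_pow_right (by have := two_le_q F; omega) (by omega)

lemma pow_ineq2 : Fintype.card F ^ 3 + Fintype.card F ^ 2 ≤ Fintype.card F ^ 4 := by
  have hq := two_le_q F
  have h32 : Fintype.card F ^ 2 ≤ Fintype.card F ^ 3 :=
    Nat.pow_le_pow_right (by omega) (by omega)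
  have h2 : Fintype.card F ^ 3 + Fintype.card F ^ 2 ≤ 2 * Fintype.card F ^ 3 := by omega
  have h3 : 2 * Fintype.card F ^ 3 ≤ Fintype.card F * Fintype.card F ^ 3 :=
    Nat.mul_le_mul_right _ hq
  calc Fintype.card F ^ 3 + Fintype.card F ^ 2 ≤ 2 * Fintype.card F ^ 3 := h2
    _ ≤ Fintype.card F * Fintype.card F ^ 3 := h3
    _ = Fintype.card F ^ 4 := by ring

lemma pow_ineq3 : Fintype.card F ≤ Fintype.card F ^ 2 :=
  Nat.le_self_pow (by omega) _

lemma filter_zero_eq : (Finset.univ.filter fun M : GG F => M = 0) = {(0 : GG F)} := by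
  ext M
  simp

lemma filter_unit_eq :
    ((Finset.univ.filter fun M : GG F => ¬M = 0).filter fun M => IsUnit M)
      = Finset.univ.filter fun M : GG F => IsUnit M := by
  rw [Finset.filter_filter]
  ext M
  simp only [Finset.mem_filter, Finset.mem_univ, true_and]
  constructor
  · exact fun h => h.2
  · intro h
    refine ⟨?_, h⟩
    rintro rfl
    exact not_isUnit_zero h

lemma filter_rank1_eq :
    ((Finset.univ.filter fun M : GG F => ¬M = 0).filter fun M => ¬IsUnit M)
      = Finset.univ.filter fun M : GG F => ¬IsUnit M ∧ M ≠ 0 := by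
  rw [Finset.filter_filter]
  ext M
  simp only [Finset.mem_filter, Finset.mem_univ, true_and]
  tauto

lemma card_units_filter :
    (Finset.univ.filter fun M : GG F => IsUnit M).card
      = Fintype.card F ^ 4 - Fintype.card F ^ 3 - Fintype.card F ^ 2 + Fintype.card F := by
  have e : (GG F)ˣ ≃ {M : GG F // IsUnit M} :=
    { toFun := fun u => ⟨u, u.isUnit⟩
      invFun := fun v => v.2.unit
      left_inv := fun u => Units.ext u.isUnit.unit_spec
      right_inv := fun v => Subtype.ext v.2.unit_spec }
  have h1 : (Finset.univ.filter fun M : GG F => IsUnit M).card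
      = Fintype.card {M : GG F // IsUnit M} := (Fintype.card_subtype _).symm
  have h2 : Fintype.card {M : GG F // IsUnit M} = Fintype.card (GG F)ˣ :=
    (Fintype.card_congr e).symm
  have h3 : Fintype.card (GG F)ˣ = Nat.card (GL (Fin 2) F) :=
    (Nat.card_eq_fintype_card).symm
  have h4 := Matrix.card_GL_field (n := 2) (𝔽 := F)
  rw [h1, h2, h3, h4, Fin.prod_univ_two]
  simp only [Fin.val_zero, Fin.val_one, pow_zero, pow_one]
  have hq := two_le_q F
  have e1 : 1 ≤ Fintype.card F ^ 2 := Nat.one_le_pow _ _ (by omega)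
  have e2 : Fintype.card F ≤ Fintype.card F ^ 2 := pow_ineq3 F
  have e3 := pow_ineq1 F
  have e4 := pow_ineq2 F
  have e5 : Fintype.card F ^ 2 ≤ Fintype.card F ^ 4 - Fintype.card F ^ 3 := by omega
  zify [e1, e2, e3, e5]
  ring

lemma card_rank1_filter :
    (Finset.univ.filter fun M : GG F => ¬IsUnit M ∧ M ≠ 0).card
      = Fintype.card F ^ 3 + Fintype.card F ^ 2 - Fintype.card F - 1 := by
  have h1 := Finset.card_filter_add_card_filter_not
    (s := Finset.univ) (p := fun M : GG F => IsUnit M)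
  have h2 : (Finset.univ.filter fun M : GG F => ¬IsUnit M)
      = insert (0 : GG F) (Finset.univ.filter fun M : GG F => ¬IsUnit M ∧ M ≠ 0) := by
    ext M
    simp only [Finset.mem_filter, Finset.mem_insert, Finset.mem_univ, true_and]
    constructor
    · intro h
      by_cases hM : M = 0
      · exact Or.inl hM
      · exact Or.inr ⟨h, hM⟩
    · rintro (rfl | ⟨h, _⟩)
      · exact not_isUnit_zero
      · exact h
  have h3 : (insert (0 : GG F) (Finset.univ.filter fun M : GG F => ¬IsUnit M ∧ M ≠ 0)).card
      = (Finset.univ.filter fun M : GG F => ¬IsUnit M ∧ M ≠ 0).card + 1 := by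
    rw [Finset.card_insert_of_notMem (by simp)]
  rw [h2, h3, card_units_filter, Finset.card_univ, card_GG] at h1
  have hq := two_le_q F
  have e1 : 1 ≤ Fintype.card F ^ 2 := Nat.one_le_pow _ _ (by omega)
  have e2 := pow_ineq3 F
  have e3 := pow_ineq1 F
  have e4 := pow_ineq2 F
  have e6 : 2 ≤ Fintype.card F ^ 3 := le_trans (by omega) (le_trans e2 (Nat.pow_le_pow_right (by omega) (by omega)))
  omega

lemma lam_zero :
    lam F 0 = ((Fintype.card F ^ 4 - Fintype.card F ^ 3 - Fintype.card F ^ 2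
      + Fintype.card F : ℕ) : ℂ) := by
  unfold lam
  have h : ∀ U : GG F, (if IsUnit U then χ F 0 U else 0) = (if IsUnit U then (1:ℂ) else 0) := by
    intro U
    rw [χ_apply]
    simp
  rw [Finset.sum_congr rfl fun U _ => h U, Finset.sum_boole, card_units_filter]

lemma cast_card_units : ((Fintype.card F ^ 4 - Fintype.card F ^ 3 - Fintype.card F ^ 2
      + Fintype.card F : ℕ) : ℂ)
    = (Fintype.card F : ℂ) ^ 4 - (Fintype.card F : ℂ) ^ 3 - (Fintype.card F : ℂ) ^ 2
      + (Fintype.card F : ℂ) := by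
  have e3 := pow_ineq1 F
  have e4 := pow_ineq2 F
  have e5 : Fintype.card F ^ 2 ≤ Fintype.card F ^ 4 - Fintype.card F ^ 3 := by omega
  push_cast [Nat.cast_sub e3, Nat.cast_sub e5]
  ring

lemma cast_card_rank1 : ((Fintype.card F ^ 3 + Fintype.card F ^ 2 - Fintype.card F
      - 1 : ℕ) : ℂ)
    = (Fintype.card F : ℂ) ^ 3 + (Fintype.card F : ℂ) ^ 2 - (Fintype.card F : ℂ) - 1 := by
  have hq := two_le_q F
  have e1 : Fintype.card F ≤ Fintype.card F ^ 3 + Fintype.card F ^ 2 := by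
    have := pow_ineq3 F; omega
  have e2 : 1 ≤ Fintype.card F ^ 3 + Fintype.card F ^ 2 - Fintype.card F := by
    have h3 : 2 ≤ Fintype.card F ^ 3 := le_trans hq (Nat.le_self_pow (by omega) _)
    have := pow_ineq3 F; omega
  push_cast [Nat.cast_sub e1, Nat.cast_sub e2]
  ring

lemma lam_one : lam F 1 = (Fintype.card F : ℂ) := by
  have hsum := sum_lam F
  rw [← Finset.sum_filter_add_sum_filter_not Finset.univ (fun M : GG F => M = 0)] at hsum
  rw [filter_zero_eq, Finset.sum_singleton] at hsum
  rw [← Finset.sum_filter_add_sum_filter_not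
    (Finset.univ.filter fun M : GG F => ¬M = 0) (fun M => IsUnit M)] at hsum
  rw [filter_unit_eq, filter_rank1_eq] at hsum
  have hs1 : ∑ M ∈ (Finset.univ.filter fun M : GG F => IsUnit M), lam F M
      = ((Fintype.card F ^ 4 - Fintype.card F ^ 3 - Fintype.card F ^ 2
          + Fintype.card F : ℕ) : ℂ) * lam F 1 := by
    rw [Finset.sum_congr rfl (fun M hM => lam_unit F M (by simpa using hM)),
      Finset.sum_const, card_units_filter, nsmul_eq_mul]
  have hs2 : ∑ M ∈ (Finset.univ.filter fun M : GG F => ¬IsUnit M ∧ M ≠ 0), lam F M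
      = ((Fintype.card F ^ 3 + Fintype.card F ^ 2 - Fintype.card F - 1 : ℕ) : ℂ)
        * ((Fintype.card F : ℂ) - (Fintype.card F : ℂ) ^ 2) := by
    rw [Finset.sum_congr rfl (fun M hM => by
      have hM' : ¬IsUnit M ∧ M ≠ 0 := by simpa using hM
      exact lam_rank1 F M hM'.2 hM'.1), Finset.sum_const, card_rank1_filter, nsmul_eq_mul]
  rw [hs1, hs2, lam_zero] at hsum
  have hGL : ((Fintype.card F ^ 4 - Fintype.card F ^ 3 - Fintype.card F ^ 2
      + Fintype.card F : ℕ) : ℂ) ≠ 0 := by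
    rw [Nat.cast_ne_zero]
    have hq := two_le_q F
    omega
  apply mul_left_cancel₀ hGL
  rw [cast_card_units F] at hsum ⊢
  rw [cast_card_rank1 F] at hsum
  linear_combination hsum

end

end UnitGraphAux

theorem stmt_13 (F : Type) [Field F] [Fintype F] [DecidableEq F] :
    ((unitGraph 2 F).adjMatrix ℂ).charpoly =
      (X - C ((Fintype.card F : ℂ) ^ 4 - (Fintype.card F : ℂ) ^ 3
          - (Fintype.card F : ℂ) ^ 2 + (Fintype.card F : ℂ))) *
      (X - C ((Fintype.card F : ℂ))) ^
          (Fintype.card F ^ 4 - Fintype.card F ^ 3 - Fintype.card F ^ 2 + Fintype.card F) *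
      (X - C ((Fintype.card F : ℂ) - (Fintype.card F : ℂ) ^ 2)) ^
          (Fintype.card F ^ 3 + Fintype.card F ^ 2 - Fintype.card F - 1) := by
  classical
  rw [UnitGraphAux.charpoly_eq]
  rw [← Finset.prod_filter_mul_prod_filter_not Finset.univ
    (fun M : UnitGraphAux.GG F => M = 0)]
  rw [UnitGraphAux.filter_zero_eq, Finset.prod_singleton]
  rw [← Finset.prod_filter_mul_prod_filter_not
    (Finset.univ.filter fun M : UnitGraphAux.GG F => ¬M = 0) (fun M => IsUnit M)]
  rw [UnitGraphAux.filter_unit_eq, UnitGraphAux.filter_rank1_eq]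
  have h0 : UnitGraphAux.lam F 0
      = (Fintype.card F : ℂ) ^ 4 - (Fintype.card F : ℂ) ^ 3 - (Fintype.card F : ℂ) ^ 2
        + (Fintype.card F : ℂ) := by
    rw [UnitGraphAux.lam_zero, UnitGraphAux.cast_card_units]
  have hu : (∏ M ∈ (Finset.univ.filter fun M : UnitGraphAux.GG F => IsUnit M),
        (X - C (UnitGraphAux.lam F M)))
      = (X - C ((Fintype.card F : ℂ))) ^
          (Fintype.card F ^ 4 - Fintype.card F ^ 3 - Fintype.card F ^ 2 + Fintype.card F) := by
    rw [Finset.prod_congr rfl (fun M hM => by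
      rw [UnitGraphAux.lam_unit F M (by simpa using hM), UnitGraphAux.lam_one]),
      Finset.prod_const, UnitGraphAux.card_units_filter]
  have hr : (∏ M ∈ (Finset.univ.filter fun M : UnitGraphAux.GG F => ¬IsUnit M ∧ M ≠ 0),
        (X - C (UnitGraphAux.lam F M)))
      = (X - C ((Fintype.card F : ℂ) - (Fintype.card F : ℂ) ^ 2)) ^
          (Fintype.card F ^ 3 + Fintype.card F ^ 2 - Fintype.card F - 1) := by
    rw [Finset.prod_congr rfl (fun M hM => by
      have hM' : ¬IsUnit M ∧ M ≠ 0 := by simpa using hM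
      rw [UnitGraphAux.lam_rank1 F M hM'.2 hM'.1]),
      Finset.prod_const, UnitGraphAux.card_rank1_filter]
  rw [h0, hu, hr, ← mul_assoc]
end

section
/- Let q be a prime power and let χ be a nontrivial additive character of F_q with values in ℂ. Then Σ_{s ∈ GL_2(F_q)} χ(s₁₁) = q − q² and Σ_{s ∈ GL_2(F_q)} χ(s₁₁ + s₂₂) = q, where s₁₁ and s₂₂ denote the (1,1)- and (2,2)-entries of s. -/
open Finset

section aux
variable {F : Type} [Field F] [Fintype F] [DecidableEq F]

private lemma gl_sum (f : Matrix (Fin 2) (Fin 2) F → ℂ) :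
    ∑ s : GL (Fin 2) F, f ↑s
      = ∑ m : Matrix (Fin 2) (Fin 2) F, if IsUnit m then f m else 0 := by
  classical
  rw [Finset.sum_ite, Finset.sum_const_zero, add_zero]
  apply Finset.sum_bij (fun (s : GL (Fin 2) F) _ => (s : Matrix (Fin 2) (Fin 2) F))
  · intro s _
    simp [Units.isUnit]
  · intro s _ t _ h
    exact Units.ext h
  · intro m hm
    rw [Finset.mem_filter] at hm
    exact ⟨hm.2.unit, Finset.mem_univ _, hm.2.unit_spec.symm⟩
  · intro s _; rfl

private def matEquiv : ((F × F) × F × F) ≃ Matrix (Fin 2) (Fin 2) F where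
  toFun p := !![p.1.1, p.1.2; p.2.1, p.2.2]
  invFun m := ((m 0 0, m 0 1), (m 1 0, m 1 1))
  left_inv p := by simp
  right_inv m := by
    ext i j
    fin_cases i <;> fin_cases j <;> simp

private lemma main_sum (G : F → F → ℂ) (f : Matrix (Fin 2) (Fin 2) F → ℂ)
    (hf : ∀ m, f m = G (m 0 0) (m 1 1)) :
    ∑ s : GL (Fin 2) F, f ↑s
      = ((Fintype.card F : ℂ)^2 - (Fintype.card F : ℂ) + 1) * (∑ a : F, ∑ d : F, G a d)
        - (Fintype.card F : ℂ) *
          ((∑ d : F, G 0 d) + ∑ a ∈ univ.erase (0 : F), G a 0) := by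
  classical
  set q : ℂ := (Fintype.card F : ℂ) with hq
  rw [gl_sum]
  rw [← Fintype.sum_equiv (matEquiv (F := F)) _ _ (fun p => rfl)]
  have key : ∀ p : (F × F) × F × F,
      (if IsUnit (matEquiv p) then f (matEquiv p) else 0)
        = (if p.1.1 * p.2.2 - p.1.2 * p.2.1 ≠ 0 then G p.1.1 p.2.2 else 0) := by
    intro p
    rw [hf]
    simp [matEquiv, Matrix.isUnit_iff_isUnit_det, Matrix.det_fin_two_of,
      isUnit_iff_ne_zero, sub_eq_zero]
  rw [Finset.sum_congr rfl (fun p _ => key p)]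
  rw [Fintype.sum_prod_type]
  simp only [Fintype.sum_prod_type]
  -- reorder to ∑ a, ∑ d, ∑ b, ∑ c
  have hre : ∀ a : F, (∑ b : F, ∑ c : F, ∑ d : F,
        (if a * d - b * c ≠ 0 then G a d else 0))
      = ∑ d : F, ∑ b : F, ∑ c : F, (if a * d - b * c ≠ 0 then G a d else 0) := by
    intro a
    rw [Finset.sum_congr rfl (fun b (_ : b ∈ univ) => Finset.sum_comm)]
    exact Finset.sum_comm
  rw [Finset.sum_congr rfl (fun a _ => hre a)]
  have L1 : ∀ (t : F) (z : ℂ),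
      ∑ b : F, ∑ c : F, (if b * c = t then z else 0)
        = (q - 1) * z + (if t = 0 then q * z else 0) := by
    intro t z
    have hb : ∀ b : F, (∑ c : F, (if b * c = t then z else 0))
        = if b = 0 then (if t = 0 then q * z else 0) else z := by
      intro b
      by_cases hb0 : b = 0
      · subst hb0
        by_cases ht : t = 0
        · subst ht; simp [Finset.card_univ, hq, mul_comm]
        · rw [Finset.sum_congr rfl (fun c _ => if_neg (by simp [Ne.symm ht])),
            Finset.sum_const_zero, if_pos rfl, if_neg ht]
      · have hc : ∀ c : F, (b * c = t) ↔ (c = b⁻¹ * t) := by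
          intro c
          rw [eq_inv_mul_iff_mul_eq₀ hb0]
        simp only [hc, hb0, if_false]
        simp
    rw [Finset.sum_congr rfl (fun b _ => hb b)]
    rw [← Finset.add_sum_erase univ _ (mem_univ (0 : F))]
    rw [if_pos rfl]
    have h2 : ∑ b ∈ univ.erase (0 : F),
        (if b = 0 then (if t = 0 then q * z else 0) else z) = (q - 1) * z := by
      rw [Finset.sum_congr rfl (fun b hb => if_neg (Finset.ne_of_mem_erase hb))]
      rw [Finset.sum_const, Finset.card_erase_of_mem (mem_univ _), Finset.card_univ]
      rw [nsmul_eq_mul, Nat.cast_sub Fintype.card_pos]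
      simp [hq]
    rw [h2]; ring
  have hinner : ∀ a d : F,
      ∑ b : F, ∑ c : F, (if a * d - b * c ≠ 0 then G a d else 0)
        = (q^2 - q + 1) * G a d - q * (if a * d = 0 then G a d else 0) := by
    intro a d
    have step : ∀ b c : F, (if a * d - b * c ≠ 0 then G a d else 0)
        = G a d - (if b * c = a * d then G a d else 0) := by
      intro b c
      by_cases h : a * d - b * c = 0
      · rw [if_neg (by simpa using h), if_pos (by linear_combination -h)]
        ring
      · rw [if_pos h, if_neg (fun hc => h (by linear_combination -hc))]
        ring
    simp only [step]
    rw [Finset.sum_congr rfl (fun b (_ : b ∈ univ) => Finset.sum_sub_distrib _ _),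
      Finset.sum_sub_distrib, L1]
    simp only [Finset.sum_const, Finset.card_univ, nsmul_eq_mul, ← hq]
    by_cases had : a * d = 0 <;> simp [had] <;> ring
  rw [Finset.sum_congr rfl (fun a _ =>
    Finset.sum_congr rfl (fun d _ => hinner a d))]
  have hsplit0 : ∑ a : F, ∑ d : F, (if a * d = 0 then G a d else 0)
      = (∑ d : F, G 0 d) + ∑ a ∈ univ.erase (0 : F), G a 0 := by
    have ha : ∀ a : F, (∑ d : F, (if a * d = 0 then G a d else 0))
        = if a = 0 then (∑ d : F, G 0 d) else G a 0 := by
      intro a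
      by_cases ha0 : a = 0
      · subst ha0; simp
      · have hd : ∀ d : F, (a * d = 0) ↔ (d = 0) := by
          intro d; simp [ha0]
        simp only [hd, ha0, if_false]
        simp
    rw [Finset.sum_congr rfl (fun a _ => ha a)]
    rw [← Finset.add_sum_erase univ _ (mem_univ (0 : F)), if_pos rfl]
    congr 1
    exact Finset.sum_congr rfl (fun a hb => if_neg (Finset.ne_of_mem_erase hb))
  simp only [Finset.sum_sub_distrib, ← Finset.mul_sum]
  rw [hsplit0]

end aux

theorem stmt_14 (F : Type) [Field F] [Fintype F] [DecidableEq F]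
    (χ : AddChar F ℂ) (hχ : ∃ a : F, χ a ≠ 1) :
    (∑ s : GL (Fin 2) F, χ ((s : Matrix (Fin 2) (Fin 2) F) 0 0) =
        (Fintype.card F : ℂ) - (Fintype.card F : ℂ) ^ 2) ∧
    (∑ s : GL (Fin 2) F,
        χ ((s : Matrix (Fin 2) (Fin 2) F) 0 0 + (s : Matrix (Fin 2) (Fin 2) F) 1 1) =
        (Fintype.card F : ℂ)) := by
  classical
  set q : ℂ := (Fintype.card F : ℂ) with hq
  have hs : ∑ x : F, χ x = 0 :=
    AddChar.sum_eq_zero_iff_ne_zero.2 (AddChar.ne_zero_iff.2 hχ)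
  have herase : ∑ a ∈ univ.erase (0 : F), χ a = -1 := by
    have h := Finset.add_sum_erase univ (fun a => χ a) (mem_univ (0 : F))
    rw [hs] at h
    simp only [AddChar.map_zero_eq_one] at h
    linear_combination h
  constructor
  · rw [main_sum (fun a _ => χ a) _ (fun m => rfl)]
    have h1 : ∑ a : F, ∑ _d : F, χ a = 0 := by
      simp only [Finset.sum_const, Finset.card_univ, nsmul_eq_mul]
      rw [← Finset.mul_sum, hs, mul_zero]
    have h2 : ∑ _d : F, χ (0 : F) = q := by
      simp [Finset.card_univ, hq]
    rw [h1, h2, herase]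
    ring
  · rw [main_sum (fun a d => χ a * χ d) _ (fun m => AddChar.map_add_eq_mul χ _ _)]
    have h1 : ∑ a : F, ∑ d : F, χ a * χ d = 0 := by
      simp only [← Finset.mul_sum, hs, mul_zero, Finset.sum_const_zero]
    have h2 : ∑ d : F, χ (0 : F) * χ d = 0 := by
      simp [hs]
    have h3 : ∑ a ∈ univ.erase (0 : F), χ a * χ (0 : F) = -1 := by
      simp only [AddChar.map_zero_eq_one, mul_one, herase]
    rw [h1, h2, h3]
    ring
end

section
/- Let q be a prime power. Every matrix in Mat_2(F_q) can be written as a sum of two matrices each of determinant 1. -/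
theorem stmt_15 (F : Type) [Field F] [Fintype F] (M : Matrix (Fin 2) (Fin 2) F) :
    ∃ A B : Matrix (Fin 2) (Fin 2) F, A.det = 1 ∧ B.det = 1 ∧ M = A + B := by
  set a := M 0 0 with ha
  set b := M 0 1 with hb
  set c := M 1 0 with hc
  set d := M 1 1 with hd
  have hM : M = !![a, b; c, d] := by
    ext i j; fin_cases i <;> fin_cases j <;> rfl
  by_cases hdd : d ≠ 0
  · refine ⟨!![(a*d - (b+1)*(c-1) - 1)/d, -1; 1, 0],
      !![a - (a*d - (b+1)*(c-1) - 1)/d, b+1; c-1, d], ?_, ?_, ?_⟩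
    · simp [Matrix.det_fin_two_of]
    · rw [Matrix.det_fin_two_of]; field_simp; ring
    · rw [hM]; ext i j; fin_cases i <;> fin_cases j <;> simp <;> ring
  · push_neg at hdd
    by_cases haa : a ≠ 0
    · refine ⟨!![0, 1; -1, (-(b-1)*(c+1) - 1)/a],
        !![a, b-1; c+1, d - (-(b-1)*(c+1) - 1)/a], ?_, ?_, ?_⟩
      · simp [Matrix.det_fin_two_of]
      · rw [Matrix.det_fin_two_of]; rw [hdd]; field_simp; ring
      · rw [hM]; ext i j; fin_cases i <;> fin_cases j <;> simp <;> ring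
    · push_neg at haa
      refine ⟨!![1, 0; c, 1], !![-1, b; 0, -1], ?_, ?_, ?_⟩
      · simp [Matrix.det_fin_two_of]
      · simp [Matrix.det_fin_two_of]
      · rw [hM, haa, hdd]; ext i j; fin_cases i <;> fin_cases j <;> simp
end

section
/- Let q be a prime power and n ≥ 2. Every nonzero matrix in Mat_n(F_q) can be written as a sum of two matrices each of determinant 1. -/
open Matrix

/-- Determinant of a matrix whose row 0 is supported at the last column and whose
entries strictly below the subdiagonal vanish. -/
lemma detT_aux {F : Type} [Field F] {m : ℕ} (M : Matrix (Fin (m + 1)) (Fin (m + 1)) F)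
    (h0 : ∀ j : Fin (m + 1), j ≠ Fin.last m → M 0 j = 0)
    (hlow : ∀ i j : Fin (m + 1), (j : ℕ) + 1 < (i : ℕ) → M i j = 0) :
    M.det = (-1) ^ m * M 0 (Fin.last m) * ∏ i : Fin m, M i.succ i.castSucc := by
  rw [Matrix.det_succ_row_zero, Finset.sum_eq_single (Fin.last m)]
  · have hminor : (M.submatrix Fin.succ (Fin.last m).succAbove).det
        = ∏ i : Fin m, M i.succ i.castSucc := by
      rw [Fin.succAbove_last, Matrix.det_of_upperTriangular]
      · simp [Matrix.submatrix_apply]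
      · intro i j hji
        rw [Matrix.submatrix_apply]
        refine hlow _ _ ?_
        have hji' : (j : ℕ) < (i : ℕ) := hji
        simp only [Fin.val_succ, Fin.coe_castSucc]
        omega
    rw [hminor, Fin.val_last]
  · intro j _ hj
    rw [h0 j hj]; ring
  · intro h; exact absurd (Finset.mem_univ _) h

/-- A diagonal matrix of size ≥ 2 whose top-left entry is nonzero is a sum of
two matrices of determinant 1. -/
lemma diag_sum_SL {F : Type} [Field F] {m : ℕ} (d : Fin (m + 2) → F) (hd : d 0 ≠ 0) :
    ∃ A B : Matrix (Fin (m + 2)) (Fin (m + 2)) F,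
      A.det = 1 ∧ B.det = 1 ∧ Matrix.diagonal d = A + B := by
  set c := d 0 with hc
  set a : Fin (m + 2) → F :=
    fun i => if i = 0 then c else if i = 1 then (1 - (-1) ^ m) / c else 1 with ha
  set A : Matrix (Fin (m + 2)) (Fin (m + 2)) F := Matrix.of fun i j =>
    if j = i then a i else if (j : ℕ) + 1 = (i : ℕ) then 1
    else if i = 0 ∧ j = Fin.last (m + 1) then -1 else 0 with hA
  have hlast0 : (Fin.last (m + 1)) ≠ (0 : Fin (m + 2)) := by
    simp [Fin.ext_iff]
  -- basic entry computations
  have hA00 : A 0 0 = c := by simp [hA, ha]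
  have hA0last : A 0 (Fin.last (m + 1)) = -1 := by
    simp [hA, ha, hlast0]
  have hA0mid : ∀ j : Fin (m + 2), j ≠ 0 → j ≠ Fin.last (m + 1) → A 0 j = 0 := by
    intro j hj0 hjl
    simp only [hA, Matrix.of_apply]
    rw [if_neg hj0, if_neg (by simp), if_neg (by simp [hjl])]
  have hAlow : ∀ i j : Fin (m + 2), (j : ℕ) + 1 < (i : ℕ) → A i j = 0 := by
    intro i j hij
    have hi0 : i ≠ 0 := by
      intro h; subst h; simp at hij
    simp only [hA, Matrix.of_apply]
    rw [if_neg (by intro h; subst h; omega), if_neg (by omega),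
      if_neg (by simp [hi0])]
  have hAsub : ∀ i : Fin (m + 1), A i.succ i.castSucc = 1 := by
    intro i
    simp only [hA, Matrix.of_apply]
    rw [if_neg (by simp [Fin.ext_iff]), if_pos (by simp)]
  have hAdiag : ∀ i : Fin (m + 2), A i i = a i := by
    intro i; simp [hA]
  have hAup : ∀ i j : Fin (m + 2), (i : ℕ) < (j : ℕ) → i ≠ 0 → A i j = 0 := by
    intro i j hij hi0
    simp only [hA, Matrix.of_apply]
    rw [if_neg (by intro h; subst h; omega), if_neg (by omega),
      if_neg (by simp [hi0])]
  refine ⟨A, Matrix.diagonal d - A, ?_, ?_, by abel⟩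
  · -- det A = 1
    set r₁ : Fin (m + 2) → F := fun j => if j = 0 then c else 0 with hr₁
    set r₂ : Fin (m + 2) → F := fun j => if j = Fin.last (m + 1) then -1 else 0 with hr₂
    have hrow : A 0 = r₁ + r₂ := by
      funext j
      by_cases hj0 : j = 0
      · subst hj0
        simp [hA00, hr₁, hr₂, hlast0.symm]
      · by_cases hjl : j = Fin.last (m + 1)
        · subst hjl
          simp [hA0last, hr₁, hr₂, hlast0]
        · simp [hA0mid j hj0 hjl, hr₁, hr₂, hj0, hjl]
    have hAeq : A = A.updateRow 0 (r₁ + r₂) := by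
      rw [← hrow, Matrix.updateRow_eq_self]
    rw [hAeq, Matrix.det_updateRow_add]
    -- first piece: lower triangular
    have h1 : (A.updateRow 0 r₁).det = 1 - (-1) ^ m := by
      rw [Matrix.det_of_lowerTriangular]
      · have hdiagval : ∀ i : Fin (m + 2), (A.updateRow 0 r₁) i i = a i := by
          intro i
          by_cases hi : i = 0
          · subst hi; simp [hr₁, ha]
          · rw [Matrix.updateRow_ne hi, hAdiag]
        calc ∏ i : Fin (m + 2), (A.updateRow 0 r₁) i i
            = ∏ i : Fin (m + 2), a i := by
              exact Finset.prod_congr rfl fun i _ => hdiagval i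
          _ = a 0 * (a 1 * ∏ i : Fin m, a i.succ.succ) := by
              simp [Fin.prod_univ_succ, Fin.succ_zero_eq_one]
          _ = 1 - (-1) ^ m := by
              have h2 : ∀ i : Fin m, a i.succ.succ = 1 := by
                intro i
                have h3 : i.succ.succ ≠ (0 : Fin (m + 2)) := Fin.succ_ne_zero _
                have h4 : i.succ.succ ≠ (1 : Fin (m + 2)) := by
                  simp [Fin.ext_iff]
                simp [ha, h3, h4]
              rw [Finset.prod_congr rfl fun i _ => h2 i]
              have ha0 : a 0 = c := by simp [ha]
              have h10 : (1 : Fin (m + 2)) ≠ 0 := by simp [Fin.ext_iff]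
              have ha1 : a 1 = (1 - (-1) ^ m) / c := by simp [ha, h10]
              rw [Finset.prod_const_one, mul_one, ha0, ha1]
              field_simp
      · intro i j hij
        have hij' : (i : ℕ) < (j : ℕ) := hij
        by_cases hi0 : i = 0
        · subst hi0
          have hj0 : j ≠ 0 := by
            intro h; subst h; omega
          simp [Matrix.updateRow_self, hr₁, hj0]
        · rw [Matrix.updateRow_ne hi0]
          exact hAup i j hij' hi0
    -- second piece: use detT_aux
    have h2 : (A.updateRow 0 r₂).det = (-1) ^ m := by
      rw [detT_aux]
      · have e1 : (A.updateRow 0 r₂) 0 (Fin.last (m + 1)) = -1 := by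
          simp [hr₂]
        have e2 : ∀ i : Fin (m + 1),
            (A.updateRow 0 r₂) i.succ i.castSucc = 1 := by
          intro i
          rw [Matrix.updateRow_ne (Fin.succ_ne_zero i), hAsub]
        rw [e1, Finset.prod_congr rfl fun i _ => e2 i]
        simp [pow_succ]
      · intro j hj
        simp [hr₂, hj]
      · intro i j hij
        have hi0 : i ≠ 0 := by intro h; subst h; simp at hij
        rw [Matrix.updateRow_ne hi0]
        exact hAlow i j hij
    rw [h1, h2]; ring
  · -- det B = 1
    rw [detT_aux]
    · have e1 : (Matrix.diagonal d - A) 0 (Fin.last (m + 1)) = 1 := by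
        simp [Matrix.diagonal_apply, hlast0.symm, hA0last]
      have e2 : ∀ i : Fin (m + 1),
          (Matrix.diagonal d - A) i.succ i.castSucc = -1 := by
        intro i
        have hne : i.succ ≠ i.castSucc := by
          simp [Fin.ext_iff]
        simp [Matrix.diagonal_apply, hne, hAsub]
      rw [e1, Finset.prod_congr rfl fun i _ => e2 i]
      rw [Finset.prod_const, Finset.card_univ, Fintype.card_fin, mul_one, ← pow_add]
      exact Even.neg_one_pow ⟨m + 1, rfl⟩
    · intro j hj
      by_cases hj0 : j = 0
      · subst hj0
        simp [Matrix.diagonal_apply, hA00, hc]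
      · have : (0 : Fin (m + 2)) ≠ j := fun h => hj0 h.symm
        simp [Matrix.diagonal_apply, this, hA0mid j hj0 hj]
    · intro i j hij
      have hij' : i ≠ j := by
        intro h; subst h; omega
      simp [Matrix.diagonal_apply, hij', hAlow i j hij]

theorem stmt_16 (F : Type) [Field F] [Fintype F] (n : ℕ) (hn : 2 ≤ n)
    (M : Matrix (Fin n) (Fin n) F) (hM : M ≠ 0) :
    ∃ A B : Matrix (Fin n) (Fin n) F, A.det = 1 ∧ B.det = 1 ∧ M = A + B := by
  obtain ⟨m, rfl⟩ : ∃ m, n = m + 2 := ⟨n - 2, by omega⟩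
  obtain ⟨L, L', D, h⟩ := Matrix.Pivot.exists_list_transvec_mul_mul_list_transvec_eq_diagonal M
  set P := (L.map Matrix.TransvectionStruct.toMatrix).prod with hPdef
  set Q := (L'.map Matrix.TransvectionStruct.toMatrix).prod with hQdef
  have hP : P.det = 1 := Matrix.TransvectionStruct.det_toMatrix_prod L
  have hQ : Q.det = 1 := Matrix.TransvectionStruct.det_toMatrix_prod L'
  have hPu : IsUnit P.det := by rw [hP]; exact isUnit_one
  have hQu : IsUnit Q.det := by rw [hQ]; exact isUnit_one
  have hM' : M = P⁻¹ * Matrix.diagonal D * Q⁻¹ := by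
    rw [← h]
    rw [Matrix.mul_assoc P M Q, Matrix.nonsing_inv_mul_cancel_left _ _ hPu,
      Matrix.mul_nonsing_inv_cancel_right _ _ hQu]
  have hD : ∃ k, D k ≠ 0 := by
    by_contra h'
    push_neg at h'
    apply hM
    have hD0 : Matrix.diagonal D = 0 := by
      ext i j
      by_cases hij : i = j <;> simp [Matrix.diagonal_apply, hij, h']
    rw [hM', hD0, Matrix.mul_zero, Matrix.zero_mul]
  obtain ⟨k, hk⟩ := hD
  set σ : Equiv.Perm (Fin (m + 2)) := Equiv.swap 0 k with hσ
  have hσ0 : σ 0 = k := Equiv.swap_apply_left 0 k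
  obtain ⟨A, B, hA, hB, hAB⟩ := diag_sum_SL (fun i => D (σ i)) (by simpa [hσ0] using hk)
  have hsub : (Matrix.diagonal fun i => D (σ i)).submatrix σ σ = Matrix.diagonal D := by
    ext i j
    by_cases hij : i = j
    · subst hij
      simp [Matrix.submatrix_apply, Matrix.diagonal_apply, hσ, Equiv.swap_apply_self]
    · rw [Matrix.submatrix_apply, Matrix.diagonal_apply_ne _ (fun h => hij (σ.injective h)),
        Matrix.diagonal_apply_ne _ hij]
  refine ⟨P⁻¹ * A.submatrix σ σ * Q⁻¹, P⁻¹ * B.submatrix σ σ * Q⁻¹, ?_, ?_, ?_⟩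
  · rw [Matrix.det_mul, Matrix.det_mul, Matrix.det_submatrix_equiv_self, hA,
      Matrix.det_nonsing_inv, Matrix.det_nonsing_inv, hP, hQ]
    simp
  · rw [Matrix.det_mul, Matrix.det_mul, Matrix.det_submatrix_equiv_self, hB,
      Matrix.det_nonsing_inv, Matrix.det_nonsing_inv, hP, hQ]
    simp
  · rw [hM', ← hsub, hAB]
    simp [Matrix.submatrix_add, Matrix.mul_add, Matrix.add_mul]
end

section
/- Let q be a prime power, let χ be a nontrivial additive character of F_q with values in ℂ, and let δ ∈ F_q. Then Σ_{s ∈ SL_2(F_q)} χ(s₁₁ + δ·s₂₂) = q · Σ_{α ∈ F_q, α ≠ 0} χ(α + δ·α⁻¹), where s₁₁ and s₂₂ denote the (1,1)- and (2,2)-entries of s. In particular, Σ_{s ∈ SL_2(F_q)} χ(s₁₁) = −q. -/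
open Finset

lemma count_pairs (F : Type) [Field F] [Fintype F] [DecidableEq F] (t : F) :
    ∑ b : F, ∑ c : F, (if b * c = t then (1:ℂ) else 0)
      = ((Fintype.card F : ℂ) - 1) + (if t = 0 then (Fintype.card F : ℂ) else 0) := by
  rw [← Finset.sum_filter_add_sum_filter_not Finset.univ (fun b : F => b = 0)]
  have h0 : ∑ b ∈ univ.filter (fun b : F => b = 0), ∑ c : F, (if b * c = t then (1:ℂ) else 0)
      = (if t = 0 then (Fintype.card F : ℂ) else 0) := by
    rw [Finset.filter_eq', if_pos (mem_univ 0), Finset.sum_singleton]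
    simp only [zero_mul]
    by_cases ht : t = 0
    · subst ht; simp [Finset.card_univ]
    · simp [Ne.symm ht, ht]
  have h1 : ∑ b ∈ univ.filter (fun b : F => ¬ b = 0), ∑ c : F, (if b * c = t then (1:ℂ) else 0)
      = (Fintype.card F : ℂ) - 1 := by
    have key : ∀ b ∈ univ.filter (fun b : F => ¬ b = 0),
        (∑ c : F, (if b * c = t then (1:ℂ) else 0)) = 1 := by
      intro b hb
      simp only [mem_filter] at hb
      have hb0 : b ≠ 0 := hb.2
      have hiff : ∀ c : F, (b * c = t) ↔ (c = b⁻¹ * t) := by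
        intro c
        constructor
        · intro h; rw [← h]; field_simp
        · intro h; subst h; field_simp
      simp only [hiff]
      rw [Finset.sum_ite_eq' Finset.univ (b⁻¹ * t) (fun _ => (1:ℂ))]
      simp
    rw [Finset.sum_congr rfl key, Finset.sum_const, nsmul_eq_mul, mul_one]
    rw [Finset.filter_not, Finset.filter_eq', if_pos (mem_univ 0)]
    rw [Finset.card_sdiff_of_subset (by simp), Finset.card_univ, Finset.card_singleton,
      Nat.cast_sub Fintype.card_pos, Nat.cast_one]
  rw [h0, h1, add_comm]

def sl2Equiv (F : Type) [Field F] [Fintype F] [DecidableEq F] :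
    Matrix.SpecialLinearGroup (Fin 2) F ≃
      {p : F × F × F × F // p.1 * p.2.1 - p.2.2.1 * p.2.2.2 = 1} where
  toFun s := ⟨((s : Matrix (Fin 2) (Fin 2) F) 0 0, (s : Matrix (Fin 2) (Fin 2) F) 1 1,
      (s : Matrix (Fin 2) (Fin 2) F) 0 1, (s : Matrix (Fin 2) (Fin 2) F) 1 0), by
    have := s.2
    rw [Matrix.det_fin_two] at this
    linear_combination this⟩
  invFun p := ⟨!![p.1.1, p.1.2.2.1; p.1.2.2.2, p.1.2.1], by
    rw [Matrix.det_fin_two_of]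
    linear_combination p.2⟩
  left_inv s := by
    apply Subtype.ext
    ext i j
    fin_cases i <;> fin_cases j <;> simp
  right_inv p := by
    apply Subtype.ext
    simp

lemma main_lemma (F : Type) [Field F] [Fintype F] [DecidableEq F]
    (χ : AddChar F ℂ) (hχ : ∃ a : F, χ a ≠ 1) (δ : F) :
    ∑ s : Matrix.SpecialLinearGroup (Fin 2) F,
        χ ((s : Matrix (Fin 2) (Fin 2) F) 0 0 + δ * (s : Matrix (Fin 2) (Fin 2) F) 1 1) =
      (Fintype.card F : ℂ) *
        ∑ a ∈ Finset.univ.filter (fun a : F => a ≠ 0), χ (a + δ * a⁻¹) := by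
  have hne : χ ≠ 1 := by
    obtain ⟨a, ha⟩ := hχ
    intro h; exact ha (by simp [h])
  set N : ℂ := (Fintype.card F : ℂ) with hN
  -- Step 1: rewrite sum over SL2 as sum over quadruples with condition
  have step1 : ∑ s : Matrix.SpecialLinearGroup (Fin 2) F,
        χ ((s : Matrix (Fin 2) (Fin 2) F) 0 0 + δ * (s : Matrix (Fin 2) (Fin 2) F) 1 1)
      = ∑ a : F, ∑ d : F, ∑ b : F, ∑ c : F,
          (if a * d - b * c = 1 then χ (a + δ * d) else 0) := by
    have e1 : ∑ s : Matrix.SpecialLinearGroup (Fin 2) F,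
          χ ((s : Matrix (Fin 2) (Fin 2) F) 0 0 + δ * (s : Matrix (Fin 2) (Fin 2) F) 1 1)
        = ∑ t : {p : F × F × F × F // p.1 * p.2.1 - p.2.2.1 * p.2.2.2 = 1},
            χ (t.1.1 + δ * t.1.2.1) :=
      Fintype.sum_equiv (sl2Equiv F) _ _ (fun s => rfl)
    rw [e1, ← Finset.sum_subtype
      (Finset.univ.filter (fun p : F × F × F × F => p.1 * p.2.1 - p.2.2.1 * p.2.2.2 = 1))
      (by intro x; simp) (fun p => χ (p.1 + δ * p.2.1))]
    rw [Finset.sum_filter, Fintype.sum_prod_type]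
    congr 1; ext a
    rw [Fintype.sum_prod_type]
    congr 1; ext d
    rw [Fintype.sum_prod_type]
  rw [step1]
  -- Step 2: pull χ out and count pairs (b, c)
  have step2 : ∀ a d : F, (∑ b : F, ∑ c : F,
        (if a * d - b * c = 1 then χ (a + δ * d) else 0))
      = χ (a + δ * d) * (N - 1) + χ (a + δ * d) * (if a * d - 1 = 0 then N else 0) := by
    intro a d
    rw [← mul_add, ← count_pairs F (a * d - 1), Finset.mul_sum]
    congr 1; ext b
    rw [Finset.mul_sum]
    congr 1; ext c
    have hiff : (a * d - b * c = 1) ↔ (b * c = a * d - 1) := by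
      constructor <;> (intro h; linear_combination -h)
    simp only [hiff]
    split <;> simp
  simp only [step2, Finset.sum_add_distrib]
  -- First part vanishes
  have hz : ∀ d : F, ∑ a : F, χ (a + δ * d) = 0 := by
    intro d
    rw [Fintype.sum_equiv (Equiv.addRight (δ * d)) (fun a => χ (a + δ * d)) (fun a => χ a)
      (fun a => rfl)]
    exact AddChar.sum_eq_zero_of_ne_one hne
  have T1 : ∑ a : F, ∑ d : F, χ (a + δ * d) * (N - 1) = 0 := by
    rw [Finset.sum_comm]
    refine Finset.sum_eq_zero fun d _ => ?_
    rw [← Finset.sum_mul, hz d, zero_mul]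
  rw [T1, zero_add]
  -- Second part
  have T2 : ∀ a : F, ∑ d : F, χ (a + δ * d) * (if a * d - 1 = 0 then N else 0)
      = if a = 0 then 0 else χ (a + δ * a⁻¹) * N := by
    intro a
    by_cases ha : a = 0
    · subst ha
      simp
    · rw [if_neg ha]
      have hiff : ∀ d : F, (a * d - 1 = 0) ↔ (d = a⁻¹) := by
        intro d
        rw [sub_eq_zero]
        constructor
        · intro h
          field_simp
          linear_combination h
        · intro h; subst h; field_simp
      simp only [hiff, mul_ite, mul_zero]
      rw [Finset.sum_ite_eq' Finset.univ a⁻¹ (fun d => χ (a + δ * d) * N)]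
      simp
  simp only [T2]
  rw [Finset.mul_sum]
  rw [Finset.sum_filter]
  refine Finset.sum_congr rfl fun x _ => ?_
  by_cases hx : x = 0 <;> simp [hx, mul_comm]

theorem stmt_18 (F : Type) [Field F] [Fintype F] [DecidableEq F]
    (χ : AddChar F ℂ) (hχ : ∃ a : F, χ a ≠ 1) (δ : F) :
    (∑ s : Matrix.SpecialLinearGroup (Fin 2) F,
        χ ((s : Matrix (Fin 2) (Fin 2) F) 0 0 + δ * (s : Matrix (Fin 2) (Fin 2) F) 1 1) =
      (Fintype.card F : ℂ) *
        ∑ a ∈ Finset.univ.filter (fun a : F => a ≠ 0), χ (a + δ * a⁻¹)) ∧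
    (∑ s : Matrix.SpecialLinearGroup (Fin 2) F,
        χ ((s : Matrix (Fin 2) (Fin 2) F) 0 0) = -(Fintype.card F : ℂ)) := by
  constructor
  · exact main_lemma F χ hχ δ
  · have hne : χ ≠ 1 := by
      obtain ⟨a, ha⟩ := hχ
      intro h; exact ha (by simp [h])
    have h := main_lemma F χ hχ 0
    simp only [zero_mul, add_zero] at h
    rw [h]
    have hsum : ∑ a ∈ Finset.univ.filter (fun a : F => a ≠ 0), χ a = -1 := by
      have h0 := AddChar.sum_eq_zero_of_ne_one hne
      rw [← Finset.add_sum_erase Finset.univ χ (Finset.mem_univ 0)] at h0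
      rw [Finset.filter_ne']
      rw [AddChar.map_zero_eq_one] at h0
      linear_combination h0
    rw [hsum]
    ring
end

section
/- Let H be a finite abelian (additive) group, let S be a nonempty subset of H, and let m ≥ 0 be a real number such that for every nontrivial additive character χ : H → ℂ one has ‖Σ_{s ∈ S} χ(s)‖ ≤ m. If X and Y are subsets of H satisfying √(|X|·|Y|) > |H|·m/|S|, then there exist x ∈ X and y ∈ Y with y − x ∈ S. In particular, if |X| > |H|·m/|S|, then there exist two (not necessarily distinct) elements x, x′ ∈ X with x′ − x ∈ S. -/
set_option maxHeartbeats 1000000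

open Finset

private theorem parseval19 (H : Type) [AddCommGroup H] [Fintype H] [DecidableEq H] (A : Finset H) :
    ∑ ψ : AddChar H ℂ, (‖∑ a ∈ A, ψ a‖ : ℝ) ^ 2 = (Fintype.card H : ℝ) * A.card := by
  have key : ∀ ψ : AddChar H ℂ, ((‖∑ a ∈ A, ψ a‖ : ℝ) ^ 2 : ℂ) =
      ∑ a ∈ A, ∑ b ∈ A, ψ (a - b) := by
    intro ψ
    have h1 : ((‖∑ a ∈ A, ψ a‖ : ℝ) ^ 2 : ℂ) = (∑ a ∈ A, ψ a) * (starRingEnd ℂ) (∑ b ∈ A, ψ b) := by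
      rw [Complex.mul_conj']
    rw [h1, map_sum, Finset.sum_mul_sum]
    refine Finset.sum_congr rfl fun a _ => Finset.sum_congr rfl fun b _ => ?_
    rw [← AddChar.map_neg_eq_conj, ← AddChar.map_add_eq_mul, sub_eq_add_neg]
  have h2 : ((∑ ψ : AddChar H ℂ, (‖∑ a ∈ A, ψ a‖ : ℝ) ^ 2 : ℝ) : ℂ)
      = (Fintype.card H : ℝ) * A.card := by
    push_cast
    rw [Finset.sum_congr rfl (fun ψ _ => key ψ)]
    rw [Finset.sum_comm]
    rw [show (∑ a ∈ A, ∑ ψ : AddChar H ℂ, ∑ b ∈ A, ψ (a - b))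
        = ∑ a ∈ A, ∑ b ∈ A, ∑ ψ : AddChar H ℂ, ψ (a - b) from
      Finset.sum_congr rfl fun a _ => Finset.sum_comm]
    have h3 : ∀ a b : H, (∑ ψ : AddChar H ℂ, ψ (a - b)) =
        if a = b then (Fintype.card H : ℂ) else 0 := by
      intro a b
      rw [AddChar.sum_apply_eq_ite]
      simp [sub_eq_zero]
    simp only [h3]
    simp [Finset.sum_ite_eq, mul_comm]
  exact_mod_cast h2

private theorem cs19 (H : Type) [AddCommGroup H] [Fintype H] (X Y : Finset H) :
    ∑ ψ : AddChar H ℂ, ‖∑ y ∈ Y, ψ y‖ * ‖∑ x ∈ X, ψ x‖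
      ≤ (Fintype.card H : ℝ) * Real.sqrt ((X.card : ℝ) * (Y.card : ℝ)) := by
  classical
  set n : ℝ := (Fintype.card H : ℝ)
  set q : ℝ := Real.sqrt ((X.card : ℝ) * (Y.card : ℝ)) with hq
  have hq2 : q ^ 2 = (X.card : ℝ) * (Y.card : ℝ) := Real.sq_sqrt (by positivity)
  have h1 : (∑ ψ : AddChar H ℂ, ‖∑ y ∈ Y, ψ y‖ * ‖∑ x ∈ X, ψ x‖) ^ 2
      ≤ (∑ ψ : AddChar H ℂ, ‖∑ y ∈ Y, ψ y‖ ^ 2) * (∑ ψ : AddChar H ℂ, ‖∑ x ∈ X, ψ x‖ ^ 2) :=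
    Finset.sum_mul_sq_le_sq_mul_sq _ _ _
  rw [parseval19 H Y, parseval19 H X] at h1
  have h2 : (n * Y.card) * (n * X.card) = (n * q) ^ 2 := by
    rw [mul_pow, hq2]; ring
  have h3 := Real.sqrt_le_sqrt (h2 ▸ h1)
  rwa [Real.sqrt_sq (by positivity), Real.sqrt_sq (by positivity)] at h3

private theorem main19 (H : Type) [AddCommGroup H] [Fintype H]
    (S : Finset H) (hS : S.Nonempty) (m : ℝ) (hm : 0 ≤ m)
    (hbound : ∀ χ : AddChar H ℂ, (∃ h : H, χ h ≠ 1) → ‖∑ s ∈ S, χ s‖ ≤ m)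
    (X Y : Finset H)
    (hXY : Real.sqrt ((X.card : ℝ) * (Y.card : ℝ)) > (Fintype.card H : ℝ) * m / (S.card : ℝ)) :
    ∃ x ∈ X, ∃ y ∈ Y, y - x ∈ S := by
  classical
  by_contra hno
  push_neg at hno
  set n : ℝ := (Fintype.card H : ℝ) with hn
  have hn0 : 0 ≤ n := by positivity
  have hScard : (0 : ℝ) < S.card := by exact_mod_cast hS.card_pos
  set q : ℝ := Real.sqrt ((X.card : ℝ) * (Y.card : ℝ)) with hq
  have hq0 : 0 < q := lt_of_le_of_lt (by positivity) hXY
  have hq2 : q ^ 2 = (X.card : ℝ) * (Y.card : ℝ) := Real.sq_sqrt (by positivity)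
  set F : AddChar H ℂ → ℂ :=
    fun ψ => (∑ y ∈ Y, ψ y) * ((∑ x ∈ X, ψ (-x)) * (∑ s ∈ S, ψ (-s))) with hF
  have keyid : ∑ ψ : AddChar H ℂ, F ψ = 0 := by
    have expand : ∀ ψ : AddChar H ℂ,
        F ψ = ∑ y ∈ Y, ∑ x ∈ X, ∑ s ∈ S, ψ (y - x - s) := by
      intro ψ
      rw [hF]
      simp only [← mul_assoc]
      rw [Finset.sum_mul_sum, Finset.sum_mul]
      refine Finset.sum_congr rfl fun y _ => ?_
      rw [Finset.sum_mul]
      refine Finset.sum_congr rfl fun x _ => ?_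
      rw [Finset.mul_sum]
      refine Finset.sum_congr rfl fun s _ => ?_
      rw [← AddChar.map_add_eq_mul, ← AddChar.map_add_eq_mul,
        sub_eq_add_neg (y - x) s, sub_eq_add_neg y x]
    calc ∑ ψ : AddChar H ℂ, F ψ
        = ∑ ψ : AddChar H ℂ, ∑ y ∈ Y, ∑ x ∈ X, ∑ s ∈ S, ψ (y - x - s) :=
          Finset.sum_congr rfl fun ψ _ => expand ψ
      _ = ∑ y ∈ Y, ∑ ψ : AddChar H ℂ, ∑ x ∈ X, ∑ s ∈ S, ψ (y - x - s) := Finset.sum_comm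
      _ = ∑ y ∈ Y, ∑ x ∈ X, ∑ ψ : AddChar H ℂ, ∑ s ∈ S, ψ (y - x - s) :=
          Finset.sum_congr rfl fun _ _ => Finset.sum_comm
      _ = ∑ y ∈ Y, ∑ x ∈ X, ∑ s ∈ S, ∑ ψ : AddChar H ℂ, ψ (y - x - s) :=
          Finset.sum_congr rfl fun _ _ => Finset.sum_congr rfl fun _ _ => Finset.sum_comm
      _ = 0 := by
          refine Finset.sum_eq_zero fun y hy => Finset.sum_eq_zero fun x hx =>
            Finset.sum_eq_zero fun s hs => ?_
          rw [AddChar.sum_apply_eq_zero_iff_ne_zero]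
          intro h0
          rw [sub_eq_zero] at h0
          exact hno x hx y hy (h0 ▸ hs)
  -- split off the trivial character
  have hsplit : F 0 = -∑ ψ ∈ Finset.univ.erase (0 : AddChar H ℂ), F ψ := by
    have h := keyid
    rw [← Finset.add_sum_erase _ F (Finset.mem_univ (0 : AddChar H ℂ))] at h
    linear_combination h
  have hnorm : ‖F 0‖ ≤ ∑ ψ ∈ Finset.univ.erase (0 : AddChar H ℂ), ‖F ψ‖ := by
    rw [hsplit, norm_neg]
    exact norm_sum_le _ _
  have hF0 : ‖F 0‖ = (Y.card : ℝ) * ((X.card : ℝ) * (S.card : ℝ)) := by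
    simp [hF]
  -- bound each nontrivial term
  have hterm : ∀ ψ ∈ Finset.univ.erase (0 : AddChar H ℂ),
      ‖F ψ‖ ≤ m * (‖∑ y ∈ Y, ψ y‖ * ‖∑ x ∈ X, ψ x‖) := by
    intro ψ hψ
    have hψ0 : ψ ≠ 0 := (Finset.mem_erase.mp hψ).1
    have hnt : ∃ h : H, ψ h ≠ 1 := AddChar.ne_zero_iff.mp hψ0
    have hconj : ∀ A : Finset H, ‖∑ a ∈ A, ψ (-a)‖ = ‖∑ a ∈ A, ψ a‖ := by
      intro A
      simp_rw [AddChar.map_neg_eq_conj]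
      rw [← map_sum]
      exact RCLike.norm_conj _
    have hSn : ‖∑ s ∈ S, ψ (-s)‖ ≤ m := (hconj S).le.trans (hbound ψ hnt)
    calc ‖F ψ‖ = ‖∑ y ∈ Y, ψ y‖ * (‖∑ x ∈ X, ψ x‖ * ‖∑ s ∈ S, ψ (-s)‖) := by
          rw [hF]; simp [norm_mul, hconj X]
      _ ≤ ‖∑ y ∈ Y, ψ y‖ * (‖∑ x ∈ X, ψ x‖ * m) := by gcongr
      _ = m * (‖∑ y ∈ Y, ψ y‖ * ‖∑ x ∈ X, ψ x‖) := by ring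
  have hsum : ∑ ψ ∈ Finset.univ.erase (0 : AddChar H ℂ), ‖F ψ‖
      ≤ m * ∑ ψ : AddChar H ℂ, ‖∑ y ∈ Y, ψ y‖ * ‖∑ x ∈ X, ψ x‖ := by
    calc ∑ ψ ∈ Finset.univ.erase (0 : AddChar H ℂ), ‖F ψ‖
        ≤ ∑ ψ ∈ Finset.univ.erase (0 : AddChar H ℂ),
            m * (‖∑ y ∈ Y, ψ y‖ * ‖∑ x ∈ X, ψ x‖) := Finset.sum_le_sum hterm
      _ ≤ ∑ ψ : AddChar H ℂ, m * (‖∑ y ∈ Y, ψ y‖ * ‖∑ x ∈ X, ψ x‖) :=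
          Finset.sum_le_sum_of_subset_of_nonneg (Finset.erase_subset _ _)
            (fun ψ _ _ => by positivity)
      _ = m * ∑ ψ : AddChar H ℂ, ‖∑ y ∈ Y, ψ y‖ * ‖∑ x ∈ X, ψ x‖ := by
          rw [Finset.mul_sum]
  -- Cauchy–Schwarz + Parseval
  have hCS : ∑ ψ : AddChar H ℂ, ‖∑ y ∈ Y, ψ y‖ * ‖∑ x ∈ X, ψ x‖ ≤ n * q :=
    cs19 H X Y
  have hfinal : (Y.card : ℝ) * ((X.card : ℝ) * (S.card : ℝ)) ≤ m * (n * q) := by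
    calc (Y.card : ℝ) * ((X.card : ℝ) * (S.card : ℝ)) = ‖F 0‖ := hF0.symm
      _ ≤ ∑ ψ ∈ Finset.univ.erase (0 : AddChar H ℂ), ‖F ψ‖ := hnorm
      _ ≤ m * ∑ ψ : AddChar H ℂ, ‖∑ y ∈ Y, ψ y‖ * ‖∑ x ∈ X, ψ x‖ := hsum
      _ ≤ m * (n * q) := by gcongr
  have h1 : n * m < q * S.card := (div_lt_iff₀ hScard).mp hXY
  nlinarith [mul_lt_mul_of_pos_left h1 hq0, hq2, hfinal]

theorem stmt_19 (H : Type) [AddCommGroup H] [Fintype H]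
    (S : Finset H) (hS : S.Nonempty) (m : ℝ) (hm : 0 ≤ m)
    (hbound : ∀ χ : AddChar H ℂ, (∃ h : H, χ h ≠ 1) → ‖∑ s ∈ S, χ s‖ ≤ m)
    (X Y : Finset H) :
    (Real.sqrt ((X.card : ℝ) * (Y.card : ℝ)) > (Fintype.card H : ℝ) * m / (S.card : ℝ) →
      ∃ x ∈ X, ∃ y ∈ Y, y - x ∈ S) ∧
    ((X.card : ℝ) > (Fintype.card H : ℝ) * m / (S.card : ℝ) →
      ∃ x ∈ X, ∃ x' ∈ X, x' - x ∈ S) := by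
  constructor
  · exact main19 H S hS m hm hbound X Y
  · intro hX
    exact main19 H S hS m hm hbound X X
      (by rwa [Real.sqrt_mul_self (by positivity)])
end
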